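/- arXiv:1502.03727 — 6 statements merged into one kernel-verified Lean document; each statement's English description precedes it below -/
import Mathlib

section
/- For every integer n ≥ 2 and every real β, the finite-volume pressure of the continuous Mallows model satisfies p_n(β) = (1/n) · ln([n]_q! / n!) evaluated at q = exp(−β/(n−1)). -/
open MeasureTheory Real Set Filter

noncomputable section

/-- Lebesgue measure on `[0,1]` (as a measure on `ℝ`). -/
def lamI : Measure ℝ := volume.restrict (Set.Icc (0:ℝ) 1)

/-- Lebesgue measure on `[0,1]²` (as a measure on `ℝ × ℝ`). -/
def lam2 : Measure (ℝ × ℝ) := lamI.prod lamI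

/-- The pair interaction `h((x₁,y₁),(x₂,y₂))`. -/
def hfun (p q : ℝ × ℝ) : ℝ := if (p.1 - q.1) * (p.2 - q.2) < 0 then 1 else 0

/-- The Hamiltonian `H_n`. -/
def HM (n : ℕ) (x : Fin n → ℝ × ℝ) : ℝ :=
  (1 / ((n : ℝ) - 1)) * ∑ i : Fin n, ∑ j : Fin n, if i < j then hfun (x i) (x j) else 0

/-- The partition function `Z_n(β)`. -/
def ZM (n : ℕ) (β : ℝ) : ℝ :=
  ∫ x : Fin n → ℝ × ℝ, Real.exp (-β * HM n x) ∂(Measure.pi fun _ : Fin n => lam2)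

/-- The finite-volume pressure `p_n(β)`. -/
def pN (n : ℕ) (β : ℝ) : ℝ := (1 / (n : ℝ)) * Real.log (ZM n β)

/-- The `q`-integer `[k]_q`. -/
def qInt (k : ℕ) (q : ℝ) : ℝ := if q = 1 then (k : ℝ) else (1 - q ^ k) / (1 - q)

/-- The `q`-factorial `[n]_q!`. -/
def qFactorial (n : ℕ) (q : ℝ) : ℝ := ∏ k ∈ Finset.range n, qInt (k + 1) q

namespace MallowsAux


def invCount {n : ℕ} (ρ : Equiv.Perm (Fin n)) : ℕ :=
  ∑ i : Fin n, ∑ j : Fin n, if i < j ∧ ρ j < ρ i then 1 else 0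

lemma qInt_eq (k : ℕ) (q : ℝ) : qInt k q = ∑ j ∈ Finset.range k, q ^ j := by
  unfold qInt
  rcases eq_or_ne q 1 with rfl | hq
  · simp
  · rw [if_neg hq, show (1 : ℝ) - q ^ k = -(q ^ k - 1) by ring,
      show (1 : ℝ) - q = -(q - 1) by ring, neg_div_neg_eq, geom_sum_eq hq]

lemma insFun_inj {n : ℕ} (p : Fin (n+1)) (e : Equiv.Perm (Fin n)) :
    Function.Injective (Fin.cases p (fun i => p.succAbove (e i)) : Fin (n+1) → Fin (n+1)) := by
  intro a b hab
  induction a using Fin.cases with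
  | zero =>
    induction b using Fin.cases with
    | zero => rfl
    | succ b =>
      simp only [Fin.cases_zero, Fin.cases_succ] at hab
      exact absurd hab.symm (Fin.succAbove_ne p (e b))
  | succ a =>
    induction b using Fin.cases with
    | zero =>
      simp only [Fin.cases_zero, Fin.cases_succ] at hab
      exact absurd hab (Fin.succAbove_ne p (e a))
    | succ b =>
      simp only [Fin.cases_succ] at hab
      rw [e.injective (p.succAbove_right_injective hab)]

def insPerm {n : ℕ} (p : Fin (n+1)) (e : Equiv.Perm (Fin n)) : Equiv.Perm (Fin (n+1)) :=
  Equiv.ofBijective (Fin.cases p (fun i => p.succAbove (e i)))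
    ((Fintype.bijective_iff_injective_and_card _).2 ⟨insFun_inj p e, rfl⟩)

@[simp] lemma insPerm_zero {n : ℕ} (p : Fin (n+1)) (e : Equiv.Perm (Fin n)) :
    insPerm p e 0 = p := by simp [insPerm]

@[simp] lemma insPerm_succ {n : ℕ} (p : Fin (n+1)) (e : Equiv.Perm (Fin n)) (i : Fin n) :
    insPerm p e i.succ = p.succAbove (e i) := by simp [insPerm]

lemma card_filter_lt {n : ℕ} (k : ℕ) (hk : k ≤ n) :
    (Finset.univ.filter fun v : Fin n => (v : ℕ) < k).card = k := by
  have h : (Finset.univ.filter fun v : Fin n => (v : ℕ) < k)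
      = Finset.map (Fin.castLEEmb hk) Finset.univ := by
    ext a
    simp only [Finset.mem_filter, Finset.mem_univ, true_and, Finset.mem_map,
      Fin.castLEEmb_apply]
    constructor
    · intro h
      exact ⟨⟨(a : ℕ), h⟩, by ext; rfl⟩
    · rintro ⟨b, rfl⟩
      simpa using b.isLt
  rw [h, Finset.card_map, Finset.card_univ, Fintype.card_fin]

lemma sum_val_lt {n : ℕ} (k : ℕ) (hk : k ≤ n) :
    (∑ v : Fin n, if (v : ℕ) < k then 1 else 0) = k := by
  rw [← Finset.card_filter]
  exact card_filter_lt k hk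

lemma invCount_insPerm {n : ℕ} (p : Fin (n+1)) (e : Equiv.Perm (Fin n)) :
    invCount (insPerm p e) = (p : ℕ) + invCount e := by
  unfold invCount
  rw [Fin.sum_univ_succ]
  congr 1
  · rw [Fin.sum_univ_succ]
    simp only [lt_self_iff_false, false_and, if_false, zero_add, Fin.succ_pos, true_and,
      insPerm_zero, insPerm_succ]
    have h1 : ∀ j : Fin n, (p.succAbove (e j) < p) ↔ ((e j : ℕ) < (p : ℕ)) := by
      intro j
      rw [Fin.succAbove_lt_iff_castSucc_lt, Fin.lt_def, Fin.coe_castSucc]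
    simp_rw [h1]
    rw [Equiv.sum_comp e (fun v : Fin n => if (v : ℕ) < (p : ℕ) then 1 else 0)]
    exact sum_val_lt (p : ℕ) (by omega)
  · refine Finset.sum_congr rfl fun i _ => ?_
    rw [Fin.sum_univ_succ]
    simp only [insPerm_succ, insPerm_zero, Fin.succ_lt_succ_iff,
      Fin.succAbove_lt_succAbove_iff, Fin.not_lt_zero, false_and, if_false, zero_add]


lemma sum_q_invCount (n : ℕ) (q : ℝ) :
    ∑ ρ : Equiv.Perm (Fin n), q ^ invCount ρ = qFactorial n q := by
  induction n with
  | zero =>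
    have h : ∀ ρ : Equiv.Perm (Fin 0), invCount ρ = 0 := fun ρ => rfl
    simp [qFactorial, h, Finset.card_univ]
  | succ n ih =>
    have hbij : Function.Bijective
        (fun pe : Fin (n+1) × Equiv.Perm (Fin n) => insPerm pe.1 pe.2) := by
      rw [Fintype.bijective_iff_injective_and_card]
      constructor
      · rintro ⟨p, e⟩ ⟨p', e'⟩ h
        have h0 : p = p' := by
          have := congrArg (fun ρ : Equiv.Perm (Fin (n+1)) => ρ 0) h
          simpa using this
        subst h0
        have h1 : e = e' := by
          ext i
          have := congrArg (fun ρ : Equiv.Perm (Fin (n+1)) => ρ i.succ) h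
          simp only [insPerm_succ] at this
          exact congrArg Fin.val (p.succAbove_right_injective this)
        rw [h1]
      · simp [Fintype.card_perm, Nat.factorial_succ, mul_comm]
    calc ∑ ρ : Equiv.Perm (Fin (n+1)), q ^ invCount ρ
        = ∑ pe : Fin (n+1) × Equiv.Perm (Fin n), q ^ invCount (insPerm pe.1 pe.2) :=
          (Function.Bijective.sum_comp hbij _).symm
      _ = ∑ pe : Fin (n+1) × Equiv.Perm (Fin n), q ^ (pe.1 : ℕ) * q ^ invCount pe.2 := by
          simp only [invCount_insPerm, pow_add]
      _ = (∑ p : Fin (n+1), q ^ (p : ℕ)) * ∑ e : Equiv.Perm (Fin n), q ^ invCount e := by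
          rw [Finset.sum_mul_sum]
          exact Fintype.sum_prod_type
            (f := fun pe : Fin (n+1) × Equiv.Perm (Fin n) => q ^ (pe.1 : ℕ) * q ^ invCount pe.2)
      _ = qInt (n+1) q * qFactorial n q := by
          rw [ih, qInt_eq, Fin.sum_univ_eq_sum_range]
      _ = qFactorial (n+1) q := by
          simp only [qFactorial]
          rw [Finset.prod_range_succ, mul_comm]


lemma prod_ite_pow {n : ℕ} (q : ℝ) (P : Fin n → Fin n → Prop) [∀ i j, Decidable (P i j)] :
    (∏ i : Fin n, ∏ j : Fin n, if P i j then q else 1)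
      = q ^ (∑ i : Fin n, ∑ j : Fin n, if P i j then 1 else 0) := by
  rw [← Finset.prod_pow_eq_pow_sum]
  refine Finset.prod_congr rfl fun i _ => ?_
  rw [← Finset.prod_pow_eq_pow_sum]
  refine Finset.prod_congr rfl fun j _ => ?_
  split_ifs <;> simp

def permConj {n : ℕ} (s t : Equiv.Perm (Fin n)) : Equiv.Perm (Fin n) ≃ Equiv.Perm (Fin n) where
  toFun σ := (s.trans σ).trans t.symm
  invFun ρ := (s.symm.trans ρ).trans t
  left_inv σ := by ext x; simp
  right_inv ρ := by ext x; simp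

lemma count_eq_invCount {n : ℕ} {f g : Fin n → ℝ} (hf : Function.Injective f)
    (hg : Function.Injective g) (σ : Equiv.Perm (Fin n)) :
    (∑ i : Fin n, ∑ j : Fin n,
        if i < j ∧ (f i - f j) * ((g ∘ σ) i - (g ∘ σ) j) < 0 then 1 else 0)
      = invCount (((Tuple.sort f).trans σ).trans (Tuple.sort g).symm) := by
  classical
  set s := Tuple.sort f with hs
  set t := Tuple.sort g with ht
  set ρ := (s.trans σ).trans t.symm with hρ
  have hfs : StrictMono (f ∘ s) :=
    (Tuple.monotone_sort f).strictMono_of_injective (hf.comp s.injective)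
  have hgt : StrictMono (g ∘ t) :=
    (Tuple.monotone_sort g).strictMono_of_injective (hg.comp t.injective)
  have hF : ∀ a b, f a < f b ↔ s.symm a < s.symm b := by
    intro a b
    have := hfs.lt_iff_lt (a := s.symm a) (b := s.symm b)
    simpa using this
  have hG : ∀ a b, g a < g b ↔ t.symm a < t.symm b := by
    intro a b
    have := hgt.lt_iff_lt (a := t.symm a) (b := t.symm b)
    simpa using this
  have hd : ∀ i j : Fin n, ((f i - f j) * ((g ∘ σ) i - (g ∘ σ) j) < 0)
      ↔ ((s.symm i < s.symm j ∧ ρ (s.symm j) < ρ (s.symm i))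
        ∨ (s.symm j < s.symm i ∧ ρ (s.symm i) < ρ (s.symm j))) := by
    intro i j
    have h1 : ρ (s.symm i) = t.symm (σ i) := by simp [hρ]
    have h2 : ρ (s.symm j) = t.symm (σ j) := by simp [hρ]
    rw [mul_neg_iff]
    simp only [sub_pos, sub_neg, Function.comp_apply, h1, h2, hF, hG]
    tauto
  have key : (Finset.univ.filter fun p : Fin n × Fin n =>
        p.1 < p.2 ∧ (f p.1 - f p.2) * ((g ∘ σ) p.1 - (g ∘ σ) p.2) < 0).card
      = (Finset.univ.filter fun p : Fin n × Fin n => p.1 < p.2 ∧ ρ p.2 < ρ p.1).card := by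
    apply Finset.card_nbij'
      (i := fun p => if s.symm p.1 < s.symm p.2 then (s.symm p.1, s.symm p.2)
        else (s.symm p.2, s.symm p.1))
      (j := fun p => if s p.1 < s p.2 then (s p.1, s p.2) else (s p.2, s p.1))
    · intro p hp
      replace hp := Finset.mem_coe.1 hp
      simp only [Finset.mem_coe, Finset.mem_filter, Finset.mem_univ, true_and] at hp ⊢
      obtain ⟨hlt, hdisc⟩ := hp
      rw [hd] at hdisc
      rcases hdisc with ⟨h1, h2⟩ | ⟨h1, h2⟩
      · rw [if_pos h1]
        exact ⟨h1, h2⟩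
      · rw [if_neg (asymm h1)]
        exact ⟨h1, h2⟩
    · intro p hp
      replace hp := Finset.mem_coe.1 hp
      simp only [Finset.mem_coe, Finset.mem_filter, Finset.mem_univ, true_and] at hp ⊢
      obtain ⟨hlt, hinv⟩ := hp
      by_cases h : s p.1 < s p.2
      · rw [if_pos h]
        refine ⟨h, ?_⟩
        rw [hd]
        left
        simpa using ⟨hlt, hinv⟩
      · have hne : s p.1 ≠ s p.2 := fun hc => absurd (s.injective hc) hlt.ne
        have h' : s p.2 < s p.1 := (not_lt.mp h).lt_of_ne' hne
        rw [if_neg h]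
        refine ⟨h', ?_⟩
        rw [hd]
        right
        simpa using ⟨hlt, hinv⟩
    · intro p hp
      replace hp := Finset.mem_coe.1 hp
      simp only [Finset.mem_filter, Finset.mem_univ, true_and] at hp
      obtain ⟨hlt, -⟩ := hp
      beta_reduce
      by_cases h : s.symm p.1 < s.symm p.2
      · rw [if_pos h]
        simp [hlt]
      · rw [if_neg h]
        have : ¬ (p.2 < p.1) := asymm hlt
        simp [hlt, this]
    · intro p hp
      replace hp := Finset.mem_coe.1 hp
      simp only [Finset.mem_filter, Finset.mem_univ, true_and] at hp
      obtain ⟨hlt, -⟩ := hp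
      beta_reduce
      by_cases h : s p.1 < s p.2
      · rw [if_pos h]
        simp [hlt]
      · have hne : s p.1 ≠ s p.2 := fun hc => absurd (s.injective hc) hlt.ne
        have h' : s p.2 < s p.1 := (not_lt.mp h).lt_of_ne' hne
        rw [if_neg h]
        have : ¬ (p.2 < p.1) := asymm hlt
        simp [hlt, this, asymm h']
  have e1 : (∑ i : Fin n, ∑ j : Fin n,
      if i < j ∧ (f i - f j) * ((g ∘ σ) i - (g ∘ σ) j) < 0 then 1 else 0)
      = (Finset.univ.filter fun p : Fin n × Fin n =>
        p.1 < p.2 ∧ (f p.1 - f p.2) * ((g ∘ σ) p.1 - (g ∘ σ) p.2) < 0).card := by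
    rw [Finset.card_filter]
    exact (Fintype.sum_prod_type (f := fun p : Fin n × Fin n =>
      if p.1 < p.2 ∧ (f p.1 - f p.2) * ((g ∘ σ) p.1 - (g ∘ σ) p.2) < 0 then 1 else 0)).symm
  have e2 : invCount ρ
      = (Finset.univ.filter fun p : Fin n × Fin n => p.1 < p.2 ∧ ρ p.2 < ρ p.1).card := by
    rw [invCount, Finset.card_filter]
    exact (Fintype.sum_prod_type (f := fun p : Fin n × Fin n =>
      if p.1 < p.2 ∧ ρ p.2 < ρ p.1 then 1 else 0)).symm
  rw [e1, e2, key]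

lemma sum_perm_W {n : ℕ} (q : ℝ) {f g : Fin n → ℝ} (hf : Function.Injective f)
    (hg : Function.Injective g) :
    (∑ σ : Equiv.Perm (Fin n), ∏ i : Fin n, ∏ j : Fin n,
        if i < j ∧ (f i - f j) * ((g ∘ σ) i - (g ∘ σ) j) < 0 then q else 1)
      = ∑ ρ : Equiv.Perm (Fin n), q ^ invCount ρ := by
  have h1 : ∀ σ : Equiv.Perm (Fin n),
      (∏ i : Fin n, ∏ j : Fin n,
        if i < j ∧ (f i - f j) * ((g ∘ σ) i - (g ∘ σ) j) < 0 then q else 1)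
      = q ^ invCount (((Tuple.sort f).trans σ).trans (Tuple.sort g).symm) := by
    intro σ
    rw [prod_ite_pow, count_eq_invCount hf hg σ]
  simp_rw [h1]
  exact Fintype.sum_bijective _ (permConj (Tuple.sort f) (Tuple.sort g)).bijective _ _
    (fun σ => rfl)



instance : IsProbabilityMeasure lamI :=
  ⟨by rw [lamI, Measure.restrict_apply_univ, Real.volume_Icc]; norm_num⟩

instance : NullSingletonClass lamI := by
  rw [lamI]; infer_instance

lemma piI_pair_null {n : ℕ} (i j : Fin n) (hij : i ≠ j) :
    Measure.pi (fun _ : Fin n => lamI) {f : Fin n → ℝ | f i = f j} = 0 := by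
  classical
  set p : Fin n → Prop := fun k => k = i with hp
  have hmp := measurePreserving_piEquivPiSubtypeProd (fun _ : Fin n => lamI) p
  set E := MeasurableEquiv.piEquivPiSubtypeProd (fun _ : Fin n => ℝ) p with hE
  set A : Set (Fin n → ℝ) := {f | f i = f j} with hA
  have hmeasA : MeasurableSet A :=
    measurableSet_eq_fun (measurable_pi_apply i) (measurable_pi_apply j)
  have hS : MeasurableSet (E.symm ⁻¹' A) := E.symm.measurable hmeasA
  have h1 : A = E ⁻¹' (E.symm ⁻¹' A) := by
    ext f; simp
  rw [h1, hmp.measure_preimage hS.nullMeasurableSet]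
  have hj' : ¬ p j := Ne.symm hij
  have h2 : (E.symm ⁻¹' A) = {uv : (∀ _ : {x // p x}, ℝ) × (∀ _ : {x // ¬ p x}, ℝ) |
      uv.2 ⟨j, hj'⟩ = uv.1 ⟨i, rfl⟩} := by
    have hsymm : ∀ (uv : (∀ _ : {x // p x}, ℝ) × (∀ _ : {x // ¬ p x}, ℝ)) (k : Fin n),
        E.symm uv k = if h : p k then uv.1 ⟨k, h⟩ else uv.2 ⟨k, h⟩ := fun uv k => rfl
    ext uv
    simp only [Set.mem_preimage, hA, Set.mem_setOf_eq, hsymm]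
    rw [dif_pos rfl, dif_neg hj']
    exact eq_comm
  rw [h2, Measure.measure_prod_null]
  · refine Filter.Eventually.of_forall fun u => ?_
    have h3 : (Prod.mk u ⁻¹' {uv : (∀ _ : {x // p x}, ℝ) × (∀ _ : {x // ¬ p x}, ℝ) |
        uv.2 ⟨j, hj'⟩ = uv.1 ⟨i, rfl⟩}) = {v : ∀ _ : {x // ¬ p x}, ℝ | v ⟨j, hj'⟩ = u ⟨i, rfl⟩} := rfl
    simp only [Pi.zero_apply]
    rw [h3]
    exact Measure.pi_hyperplane (fun _ : {x // ¬ p x} => lamI) ⟨j, hj'⟩ (u ⟨i, rfl⟩)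
  · exact measurableSet_eq_fun measurable_snd.eval measurable_fst.eval

lemma piI_noninj_null (n : ℕ) :
    Measure.pi (fun _ : Fin n => lamI) {f : Fin n → ℝ | ¬ Function.Injective f} = 0 := by
  have hsub : {f : Fin n → ℝ | ¬ Function.Injective f}
      ⊆ ⋃ (i : Fin n), ⋃ (j : Fin n), ⋃ (_ : i ≠ j), {f : Fin n → ℝ | f i = f j} := by
    intro f hf
    simp only [Function.Injective, not_forall, Set.mem_setOf_eq] at hf
    obtain ⟨i, j, hfij, hij⟩ := hf
    exact Set.mem_iUnion.2 ⟨i, Set.mem_iUnion.2 ⟨j, Set.mem_iUnion.2 ⟨hij, hfij⟩⟩⟩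
  exact measure_mono_null hsub (measure_iUnion_null fun i => measure_iUnion_null fun j =>
    measure_iUnion_null fun hij => piI_pair_null i j hij)


lemma ZM_eq (n : ℕ) (β : ℝ) :
    ZM n β = qFactorial n (Real.exp (-β / ((n : ℝ) - 1))) / (Nat.factorial n : ℝ) := by
  classical
  set q : ℝ := Real.exp (-β / ((n : ℝ) - 1)) with hqdef
  have hq0 : 0 < q := Real.exp_pos _
  set piμ : Measure (Fin n → ℝ) := Measure.pi (fun _ : Fin n => lamI) with hpiμ
  set Pμ : Measure ((Fin n → ℝ) × (Fin n → ℝ)) := piμ.prod piμ with hPμ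
  have hWdef : ∀ fg : (Fin n → ℝ) × (Fin n → ℝ), True := fun _ => trivial
  set W : (Fin n → ℝ) × (Fin n → ℝ) → ℝ := fun fg =>
    ∏ i : Fin n, ∏ j : Fin n,
      if i < j ∧ (fg.1 i - fg.1 j) * (fg.2 i - fg.2 j) < 0 then q else 1 with hW
  -- Step 1: pointwise identity
  have hexp : ∀ x : Fin n → ℝ × ℝ, Real.exp (-β * HM n x)
      = W (fun i => (x i).1, fun i => (x i).2) := by
    intro x
    have h1 : -β * HM n x = ∑ i : Fin n, ∑ j : Fin n,
        (-β / ((n : ℝ) - 1)) * (if i < j then hfun (x i) (x j) else 0) := by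
      rw [HM]
      rw [show -β * ((1 / ((n:ℝ) - 1)) * ∑ i : Fin n, ∑ j : Fin n,
          (if i < j then hfun (x i) (x j) else 0))
        = (-β / ((n:ℝ)-1)) * ∑ i : Fin n, ∑ j : Fin n,
          (if i < j then hfun (x i) (x j) else 0) by ring]
      rw [Finset.mul_sum]
      exact Finset.sum_congr rfl fun i _ => Finset.mul_sum _ _ _
    rw [h1, Real.exp_sum, hW]
    refine Finset.prod_congr rfl fun i _ => ?_
    rw [Real.exp_sum]
    refine Finset.prod_congr rfl fun j _ => ?_
    by_cases hij : i < j
    · by_cases hd : ((x i).1 - (x j).1) * ((x i).2 - (x j).2) < 0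
      · simp [hfun, hij, hd, hqdef]
      · simp [hfun, hij, hd]
    · simp [hij]
  -- Step 2: change of variables
  have harrow := measurePreserving_arrowProdEquivProdArrow ℝ ℝ (Fin n)
    (fun _ => lamI) (fun _ => lamI)
  have hZ1 : ZM n β = ∫ fg, W fg ∂Pμ := by
    rw [ZM]
    have hE : ∀ x : Fin n → ℝ × ℝ,
        (MeasurableEquiv.arrowProdEquivProdArrow ℝ ℝ (Fin n)) x
          = (fun i => (x i).1, fun i => (x i).2) := fun x => rfl
    calc ∫ x : Fin n → ℝ × ℝ, Real.exp (-β * HM n x) ∂(Measure.pi fun _ : Fin n => lam2)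
        = ∫ x : Fin n → ℝ × ℝ,
            W ((MeasurableEquiv.arrowProdEquivProdArrow ℝ ℝ (Fin n)) x)
            ∂(Measure.pi fun _ : Fin n => lam2) := by
          refine integral_congr_ae (Filter.Eventually.of_forall fun x => ?_)
          exact (hexp x).trans (congrArg W (hE x)).symm
      _ = ∫ fg, W fg ∂Pμ := harrow.integral_comp
            (MeasurableEquiv.arrowProdEquivProdArrow ℝ ℝ (Fin n)).measurableEmbedding W
  -- Step 3: measurability and integrability
  have hWmeas : Measurable W := by
    rw [hW]
    refine Finset.measurable_prod _ fun i _ => Finset.measurable_prod _ fun j _ => ?_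
    by_cases hij : i < j
    · simp only [hij, true_and]
      refine Measurable.ite ?_ measurable_const measurable_const
      exact measurableSet_lt (by fun_prop) measurable_const
    · simp only [hij, false_and, if_false]
      exact measurable_const
  have hWnn : ∀ fg, 0 ≤ W fg := by
    intro fg
    rw [hW]
    refine Finset.prod_nonneg fun i _ => Finset.prod_nonneg fun j _ => ?_
    split_ifs
    exacts [hq0.le, zero_le_one]
  have hWbd : ∀ fg : (Fin n → ℝ) × (Fin n → ℝ), ‖W fg‖ ≤ (max 1 q) ^ (n * n) := by
    intro fg
    rw [Real.norm_eq_abs, abs_of_nonneg (hWnn fg), hW]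
    calc (∏ i : Fin n, ∏ j : Fin n,
          if i < j ∧ (fg.1 i - fg.1 j) * (fg.2 i - fg.2 j) < 0 then q else 1)
        ≤ ∏ i : Fin n, ∏ j : Fin n, max 1 q := by
          refine Finset.prod_le_prod (fun i _ => Finset.prod_nonneg fun j _ => ?_)
            (fun i _ => Finset.prod_le_prod (fun j _ => ?_) (fun j _ => ?_))
          · split_ifs; exacts [hq0.le, zero_le_one]
          · split_ifs; exacts [hq0.le, zero_le_one]
          · split_ifs; exacts [le_max_right 1 q, le_max_left 1 q]
      _ = (max 1 q) ^ (n * n) := by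
          simp [Finset.prod_const, pow_mul]
  have hWint : Integrable W Pμ :=
    (integrable_const ((max 1 q) ^ (n * n))).mono' hWmeas.aestronglyMeasurable
      (Filter.Eventually.of_forall hWbd)
  -- Step 4: reindexing the second component
  have hmpσ : ∀ σ : Equiv.Perm (Fin n),
      MeasurePreserving (fun g : Fin n → ℝ => g ∘ σ) piμ piμ := by
    intro σ
    have hcoe : ⇑(MeasurableEquiv.piCongrLeft (fun _ : Fin n => ℝ) σ.symm)
        = fun g : Fin n → ℝ => g ∘ σ := by
      funext g
      funext i
      have h1 := MeasurableEquiv.piCongrLeft_apply_apply σ.symm (β := fun _ : Fin n => ℝ) g (σ i)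
      simpa using h1
    have h2 := measurePreserving_piCongrLeft (fun _ : Fin n => lamI) σ.symm
    rwa [hcoe] at h2
  have hTmp : ∀ σ : Equiv.Perm (Fin n),
      MeasurePreserving (fun fg : (Fin n → ℝ) × (Fin n → ℝ) => (fg.1, fg.2 ∘ σ)) Pμ Pμ :=
    fun σ => (MeasurePreserving.id piμ).prod (hmpσ σ)
  have hTemb : ∀ σ : Equiv.Perm (Fin n),
      MeasurableEmbedding (fun fg : (Fin n → ℝ) × (Fin n → ℝ) => (fg.1, fg.2 ∘ σ)) := by
    intro σ
    have hcoe : ⇑(MeasurableEquiv.piCongrLeft (fun _ : Fin n => ℝ) σ.symm)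
        = fun g : Fin n → ℝ => g ∘ σ := by
      funext g
      funext i
      have h1 := MeasurableEquiv.piCongrLeft_apply_apply σ.symm (β := fun _ : Fin n => ℝ) g (σ i)
      simpa using h1
    have h2 : ⇑((MeasurableEquiv.refl (Fin n → ℝ)).prodCongr
        (MeasurableEquiv.piCongrLeft (fun _ : Fin n => ℝ) σ.symm))
        = fun fg : (Fin n → ℝ) × (Fin n → ℝ) => (fg.1, fg.2 ∘ σ) := by
      funext fg
      have : ((MeasurableEquiv.refl (Fin n → ℝ)).prodCongr
          (MeasurableEquiv.piCongrLeft (fun _ : Fin n => ℝ) σ.symm)) fg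
          = (fg.1, (MeasurableEquiv.piCongrLeft (fun _ : Fin n => ℝ) σ.symm) fg.2) := rfl
      rw [this, hcoe]
    exact h2 ▸ ((MeasurableEquiv.refl (Fin n → ℝ)).prodCongr
        (MeasurableEquiv.piCongrLeft (fun _ : Fin n => ℝ) σ.symm)).measurableEmbedding
  have hint : ∀ σ : Equiv.Perm (Fin n),
      ∫ fg, W (fg.1, fg.2 ∘ σ) ∂Pμ = ∫ fg, W fg ∂Pμ :=
    fun σ => (hTmp σ).integral_comp (hTemb σ) W
  have hintegσ : ∀ σ : Equiv.Perm (Fin n),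
      Integrable (fun fg : (Fin n → ℝ) × (Fin n → ℝ) => W (fg.1, fg.2 ∘ σ)) Pμ :=
    fun σ => ((hTmp σ).integrable_comp_emb (hTemb σ)).2 hWint
  -- Step 5: the key computation
  have hbad1 : Pμ {fg : (Fin n → ℝ) × (Fin n → ℝ) | ¬ Function.Injective fg.1} = 0 := by
    have he : {fg : (Fin n → ℝ) × (Fin n → ℝ) | ¬ Function.Injective fg.1}
        = {f : Fin n → ℝ | ¬ Function.Injective f} ×ˢ (Set.univ : Set (Fin n → ℝ)) := by
      ext fg; simp [Set.mem_prod]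
    rw [hPμ, he, Measure.prod_prod, hpiμ, piI_noninj_null, zero_mul]
  have hbad2 : Pμ {fg : (Fin n → ℝ) × (Fin n → ℝ) | ¬ Function.Injective fg.2} = 0 := by
    have he : {fg : (Fin n → ℝ) × (Fin n → ℝ) | ¬ Function.Injective fg.2}
        = (Set.univ : Set (Fin n → ℝ)) ×ˢ {f : Fin n → ℝ | ¬ Function.Injective f} := by
      ext fg; simp [Set.mem_prod]
    rw [hPμ, he, Measure.prod_prod, hpiμ, piI_noninj_null, mul_zero]
  have key : (Nat.factorial n : ℝ) * ∫ fg, W fg ∂Pμ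
      = ∑ ρ : Equiv.Perm (Fin n), q ^ invCount ρ := by
    have h1 : ∑ σ : Equiv.Perm (Fin n), ∫ fg, W (fg.1, fg.2 ∘ σ) ∂Pμ
        = (Nat.factorial n : ℝ) * ∫ fg, W fg ∂Pμ := by
      simp_rw [hint]
      rw [Finset.sum_const, Finset.card_univ, Fintype.card_perm, Fintype.card_fin,
        nsmul_eq_mul]
    rw [← h1, ← integral_finset_sum _ (fun σ _ => hintegσ σ)]
    have hae : ∀ᵐ fg ∂Pμ, (∑ σ : Equiv.Perm (Fin n), W (fg.1, fg.2 ∘ σ))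
        = ∑ ρ : Equiv.Perm (Fin n), q ^ invCount ρ := by
      filter_upwards [compl_mem_ae_iff.2 hbad1, compl_mem_ae_iff.2 hbad2] with fg h1' h2'
      have hf : Function.Injective fg.1 := by simpa using h1'
      have hg : Function.Injective fg.2 := by simpa using h2'
      simp only [hW]
      exact sum_perm_W q hf hg
    rw [integral_congr_ae hae, integral_const]
    simp
  have hfac : (Nat.factorial n : ℝ) ≠ 0 := Nat.cast_ne_zero.mpr (Nat.factorial_ne_zero n)
  rw [hZ1, ← sum_q_invCount n q, eq_div_iff hfac, mul_comm]
  exact key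

end MallowsAux

/-- For every `n ≥ 2` and real `β`, the finite-volume pressure satisfies
`p_n(β) = (1/n) ln([n]_q!/n!)` at `q = exp(−β/(n−1))`. -/
theorem statement0 (n : ℕ) (hn : 2 ≤ n) (β : ℝ) :
    pN n β = (1 / (n : ℝ)) *
      Real.log (qFactorial n (Real.exp (-β / ((n : ℝ) - 1))) / (Nat.factorial n : ℝ)) := by
  rw [pN, MallowsAux.ZM_eq n β]

end
end

section
/- For each β ∈ ℝ and each (θ₁,θ₂) ∈ (0,1)², the function t ↦ Φ_β(θ₁,θ₂;t) is strictly convex on the interval I_{θ₁,θ₂} = [max{0, θ₁+θ₂−1}, min{θ₁,θ₂}]. -/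
open MeasureTheory Real Set Filter ENNReal
open scoped Classical

noncomputable section

/-- The limiting pressure `p(β)`, interpreted as `0` at `β = 0`. -/
def pP (β : ℝ) : ℝ :=
  if β = 0 then 0 else ∫ x in (0:ℝ)..1, Real.log ((1 - Real.exp (-β * x)) / (β * x))

/-- The relative entropy `S(ν | λ⊗²) ∈ ℝ ∪ {−∞}` for measures on `[0,1]²`. -/
def Srel2 (ν : Measure (ℝ × ℝ)) : EReal :=
  if ν ≪ lam2 then (((- ∫ p, Real.log ((ν.rnDeriv lam2 p).toReal) ∂ν) : ℝ) : EReal) else ⊥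

/-- The relative entropy `S(μ | λ) ∈ ℝ ∪ {−∞}` for measures on `[0,1]`. -/
def Srel1 (μ : Measure ℝ) : EReal :=
  if μ ≪ lamI then (((- ∫ x, Real.log ((μ.rnDeriv lamI x).toReal) ∂μ) : ℝ) : EReal) else ⊥

/-- The mean-field energy `ℰ(ν)`. -/
def energy (ν : Measure (ℝ × ℝ)) : ℝ := (1 / 2) * ∫ p, ∫ q, hfun p q ∂ν ∂ν

/-- The large deviation rate function `I_β(ν) = −(S(ν|λ⊗²) − β ℰ(ν) − p(β))`. -/
def rate (β : ℝ) (ν : Measure (ℝ × ℝ)) : EReal :=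
  -(Srel2 ν - ((β * energy ν : ℝ) : EReal) - ((pP β : ℝ) : EReal))

/-- The explicit four-square value `Φ̃_β(θ₁,θ₂;t₁₁,t₁₂,t₂₁,t₂₂)`. -/
def Phit (β θ₁ θ₂ t₁₁ t₁₂ t₂₁ t₂₂ : ℝ) : ℝ :=
  pP β + t₁₁ * Real.log (t₁₁ / (θ₁ * θ₂)) + t₁₂ * Real.log (t₁₂ / (θ₁ * (1 - θ₂)))
    + t₂₁ * Real.log (t₂₁ / ((1 - θ₁) * θ₂)) + t₂₂ * Real.log (t₂₂ / ((1 - θ₁) * (1 - θ₂)))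
    + t₁₁ * pP (β * t₁₁) + t₁₂ * pP (β * t₁₂) + t₂₁ * pP (β * t₂₁) + t₂₂ * pP (β * t₂₂)
    - (t₁₁ + t₁₂) * pP (β * (t₁₁ + t₁₂)) - (t₁₁ + t₂₁) * pP (β * (t₁₁ + t₂₁))
    - (t₁₂ + t₂₂) * pP (β * (t₁₂ + t₂₂)) - (t₂₁ + t₂₂) * pP (β * (t₂₁ + t₂₂))
    + β * t₁₂ * t₂₁

/-- The one-parameter reduction `Φ_β(θ₁,θ₂;t)`. -/
def Phi (β θ₁ θ₂ t : ℝ) : ℝ := Phit β θ₁ θ₂ t (θ₁ - t) (θ₂ - t) (1 - θ₁ - θ₂ + t)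


/-- integrand of the primitive -/
def gA (u : ℝ) : ℝ := Real.log ((1 - Real.exp (-u)) / u)

/-- primitive of `gA` -/
def GA (b : ℝ) : ℝ := ∫ u in (0:ℝ)..b, gA u

lemma gA_zero : gA 0 = 0 := by simp [gA]

lemma one_sub_exp_neg_ne {u : ℝ} (hu : u ≠ 0) : 1 - Real.exp (-u) ≠ 0 := by
  intro h
  have h1 : Real.exp (-u) = 1 := by linarith
  have := (Real.exp_eq_one_iff (-u)).mp h1
  exact hu (by linarith)

def gdA (u : ℝ) : ℝ := Real.exp (-u) / (1 - Real.exp (-u)) - u⁻¹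

lemma hasDerivAt_gA {u : ℝ} (hu : u ≠ 0) : HasDerivAt gA (gdA u) u := by
  have h1 : 1 - Real.exp (-u) ≠ 0 := one_sub_exp_neg_ne hu
  have hinner : HasDerivAt (fun v : ℝ => 1 - Real.exp (-v)) (Real.exp (-u)) u := by
    have h2 : HasDerivAt (fun v : ℝ => Real.exp (-v)) (Real.exp (-u) * (-1)) u :=
      (Real.hasDerivAt_exp (-u)).comp u (hasDerivAt_neg u)
    simpa using (hasDerivAt_const u (1:ℝ)).fun_sub h2
  have hlog1 : HasDerivAt (fun v : ℝ => Real.log (1 - Real.exp (-v)))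
      ((1 - Real.exp (-u))⁻¹ * Real.exp (-u)) u :=
    by have := (Real.hasDerivAt_log h1).comp u hinner; exact this
  have hmain : HasDerivAt (fun v : ℝ => Real.log (1 - Real.exp (-v)) - Real.log v)
      ((1 - Real.exp (-u))⁻¹ * Real.exp (-u) - u⁻¹) u :=
    hlog1.sub (Real.hasDerivAt_log hu)
  have heq : gA =ᶠ[nhds u] (fun v : ℝ => Real.log (1 - Real.exp (-v)) - Real.log v) := by
    have hmem : ({0}ᶜ : Set ℝ) ∈ nhds u := isOpen_compl_singleton.mem_nhds (by simpa using hu)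
    filter_upwards [hmem] with v hv
    have hv0 : v ≠ 0 := by simpa using hv
    rw [gA, Real.log_div (one_sub_exp_neg_ne hv0) hv0]
  have := hmain.congr_of_eventuallyEq heq
  simpa [gdA, div_eq_inv_mul] using this

lemma continuous_gA : Continuous gA := by
  rw [continuous_iff_continuousAt]
  intro u
  rcases eq_or_ne u 0 with rfl | hu
  · have hslope : Tendsto (fun v : ℝ => (1 - Real.exp (-v)) / v) (nhdsWithin 0 {(0:ℝ)}ᶜ) (nhds 1) := by
      have hinner : HasDerivAt (fun v : ℝ => 1 - Real.exp (-v)) 1 0 := by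
        have h2 : HasDerivAt (fun v : ℝ => Real.exp (-v)) (Real.exp (-(0:ℝ)) * (-1)) 0 :=
          (Real.hasDerivAt_exp (-(0:ℝ))).comp 0 (hasDerivAt_neg 0)
        simpa using (hasDerivAt_const (0:ℝ) (1:ℝ)).fun_sub h2
      have := hasDerivAt_iff_tendsto_slope.mp hinner
      have hsl : slope (fun v : ℝ => 1 - Real.exp (-v)) 0 = fun v : ℝ => (1 - Real.exp (-v)) / v := by
        funext v
        rw [slope_def_field]
        simp
      rwa [hsl] at this
    have hlog : Tendsto gA (nhdsWithin 0 {(0:ℝ)}ᶜ) (nhds 0) := by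
      have := (Real.continuousAt_log (one_ne_zero)).tendsto.comp hslope
      rw [Real.log_one] at this
      exact this
    have hpure : Tendsto gA (pure (0:ℝ)) (nhds 0) := by
      simpa [gA_zero] using (tendsto_pure_nhds gA 0)
    have hcomb : Tendsto gA (nhdsWithin 0 {(0:ℝ)}ᶜ ⊔ pure 0) (nhds 0) :=
      tendsto_sup.mpr ⟨hlog, hpure⟩
    rw [ContinuousAt, gA_zero]
    rwa [nhdsNE_sup_pure] at hcomb
  · exact (hasDerivAt_gA hu).continuousAt

lemma hasDerivAt_GA (b : ℝ) : HasDerivAt GA (gA b) b := by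
  unfold GA
  exact (continuous_gA.integral_hasStrictDerivAt 0 b).hasDerivAt

lemma pP_eq {b : ℝ} (hb : b ≠ 0) : pP b = b⁻¹ * GA b := by
  rw [pP, if_neg hb, GA]
  have h : ∀ x : ℝ, Real.log ((1 - Real.exp (-b * x)) / (b * x)) = gA (b * x) := by
    intro x; rw [gA, neg_mul]
  simp_rw [h]
  rw [intervalIntegral.integral_comp_mul_left gA hb]
  simp

lemma mul_pP {β : ℝ} (hβ : β ≠ 0) (s : ℝ) : s * pP (β * s) = β⁻¹ * GA (β * s) := by
  rcases eq_or_ne s 0 with rfl | hs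
  · simp [GA]
  · rw [pP_eq (mul_ne_zero hβ hs)]
    field_simp

def fA (β s : ℝ) : ℝ := s * Real.log s + s * pP (β * s)
def fdA (β s : ℝ) : ℝ := Real.log s + 1 + gA (β * s)
def fddA (β s : ℝ) : ℝ :=
  if β = 0 then s⁻¹ else β * Real.exp (-(β * s)) / (1 - Real.exp (-(β * s)))

lemma fA_zero_eq : fA 0 = fun s => s * Real.log s := by
  funext s; simp [fA, pP]

lemma fA_ne_eq {β : ℝ} (hβ : β ≠ 0) : fA β = fun s => s * Real.log s + β⁻¹ * GA (β * s) := by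
  funext s; rw [fA, mul_pP hβ]

lemma continuous_fA (β : ℝ) : Continuous (fA β) := by
  rcases eq_or_ne β 0 with rfl | hβ
  · rw [fA_zero_eq]; exact Real.continuous_mul_log
  · rw [fA_ne_eq hβ]
    have hGAd : Differentiable ℝ GA := fun b => (hasDerivAt_GA b).differentiableAt
    have hGA : Continuous GA := hGAd.continuous
    exact Real.continuous_mul_log.add
      (continuous_const.mul (hGA.comp (continuous_const.mul continuous_id)))

lemma hasDerivAt_fA {β s : ℝ} (hs : s ≠ 0) : HasDerivAt (fA β) (fdA β s) s := by
  rcases eq_or_ne β 0 with rfl | hβ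
  · rw [fA_zero_eq]
    have := Real.hasDerivAt_mul_log hs
    have he : fdA 0 s = Real.log s + 1 := by simp [fdA, gA_zero]
    rw [he]
    exact this
  · rw [fA_ne_eq hβ]
    have hinner : HasDerivAt (fun t : ℝ => β * t) β s := by
      simpa using (hasDerivAt_id s).const_mul β
    have hG : HasDerivAt (fun t : ℝ => GA (β * t)) (gA (β * s) * β) s :=
      (hasDerivAt_GA (β * s)).comp s hinner
    have h := (Real.hasDerivAt_mul_log hs).add (hG.const_mul β⁻¹)
    have he : fdA β s = Real.log s + 1 + β⁻¹ * (gA (β * s) * β) := by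
      rw [fdA]; field_simp
    rw [he]
    exact h

lemma hasDerivAt_fdA {β s : ℝ} (hs : 0 < s) : HasDerivAt (fdA β) (fddA β s) s := by
  rcases eq_or_ne β 0 with rfl | hβ
  · have he : fdA 0 = fun t => Real.log t + 1 + 0 := by
      funext t; simp [fdA, gA_zero]
    rw [he, fddA, if_pos rfl]
    exact (((Real.hasDerivAt_log hs.ne').add_const 1).add_const 0)
  · have hu : β * s ≠ 0 := mul_ne_zero hβ hs.ne'
    have hinner : HasDerivAt (fun t : ℝ => β * t) β s := by
      simpa using (hasDerivAt_id s).const_mul β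
    have hg : HasDerivAt (fun t : ℝ => gA (β * t)) (gdA (β * s) * β) s :=
      (hasDerivAt_gA hu).comp s hinner
    have h := ((Real.hasDerivAt_log hs.ne').add_const 1).add hg
    have he : fddA β s = s⁻¹ + gdA (β * s) * β := by
      rw [fddA, if_neg hβ, gdA]
      have h1 : 1 - Real.exp (-(β * s)) ≠ 0 := one_sub_exp_neg_ne hu
      field_simp
      ring
    rw [he]
    exact h

lemma one_sub_exp_sign {β s : ℝ} (hβ : β ≠ 0) (hs : 0 < s) :
    0 < β / (1 - Real.exp (-(β * s))) := by
  rcases lt_or_gt_of_ne hβ with hβn | hβp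
  · have : 1 < Real.exp (-(β * s)) := by
      rw [Real.one_lt_exp_iff]
      nlinarith
    exact div_pos_of_neg_of_neg hβn (by linarith)
  · have : Real.exp (-(β * s)) < 1 := by
      rw [Real.exp_lt_one_iff]
      nlinarith
    exact div_pos hβp (by linarith)

lemma fddA_pos {β s : ℝ} (hs : 0 < s) : 0 < fddA β s := by
  rcases eq_or_ne β 0 with rfl | hβ
  · rw [fddA, if_pos rfl]; positivity
  · rw [fddA, if_neg hβ]
    have h := one_sub_exp_sign hβ hs
    have hE : 0 < Real.exp (-(β * s)) := Real.exp_pos _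
    calc (0:ℝ) < (β / (1 - Real.exp (-(β * s)))) * Real.exp (-(β * s)) := mul_pos h hE
      _ = β * Real.exp (-(β * s)) / (1 - Real.exp (-(β * s))) := by ring
lemma fddA_add_pos {β s : ℝ} (hs : 0 < s) : 0 < fddA β s + β := by
  rcases eq_or_ne β 0 with rfl | hβ
  · rw [fddA, if_pos rfl]; simpa using inv_pos.mpr hs
  · rw [fddA, if_neg hβ]
    have h := one_sub_exp_sign hβ hs
    have h1 : 1 - Real.exp (-(β * s)) ≠ 0 := one_sub_exp_neg_ne (mul_ne_zero hβ hs.ne')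
    have he : β * Real.exp (-(β * s)) / (1 - Real.exp (-(β * s))) + β
        = β / (1 - Real.exp (-(β * s))) := by
      field_simp
      ring
    rw [he]
    exact h

lemma ent_split (s : ℝ) {c : ℝ} (hc : c ≠ 0) :
    s * Real.log (s / c) = s * Real.log s - s * Real.log c := by
  rcases eq_or_ne s 0 with rfl | hs
  · simp
  · rw [Real.log_div hs hc]; ring

/-- slope of the affine part -/
def cA (θ₁ θ₂ : ℝ) : ℝ := -Real.log (θ₁ * θ₂) + Real.log (θ₁ * (1 - θ₂))
  + Real.log ((1 - θ₁) * θ₂) - Real.log ((1 - θ₁) * (1 - θ₂))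

/-- constant part -/
def cB (β θ₁ θ₂ : ℝ) : ℝ := pP β - θ₁ * Real.log (θ₁ * (1 - θ₂))
  - θ₂ * Real.log ((1 - θ₁) * θ₂) - (1 - θ₁ - θ₂) * Real.log ((1 - θ₁) * (1 - θ₂))
  - θ₁ * pP (β * θ₁) - θ₂ * pP (β * θ₂) - (1 - θ₂) * pP (β * (1 - θ₂))
  - (1 - θ₁) * pP (β * (1 - θ₁))

lemma phi_decomp (β : ℝ) {θ₁ θ₂ : ℝ} (h1p : 0 < θ₁) (h1l : θ₁ < 1)
    (h2p : 0 < θ₂) (h2l : θ₂ < 1) (t : ℝ) :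
    Phi β θ₁ θ₂ t = fA β t + fA β (θ₁ - t) + fA β (θ₂ - t) + fA β (1 - θ₁ - θ₂ + t)
      + β * ((θ₁ - t) * (θ₂ - t)) + (cA θ₁ θ₂ * t + cB β θ₁ θ₂) := by
  have h11 : θ₁ * θ₂ ≠ 0 := by positivity
  have h12 : θ₁ * (1 - θ₂) ≠ 0 := by
    have : 0 < 1 - θ₂ := by linarith
    positivity
  have h21 : (1 - θ₁) * θ₂ ≠ 0 := by
    have : 0 < 1 - θ₁ := by linarith
    positivity
  have h22 : (1 - θ₁) * (1 - θ₂) ≠ 0 := by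
    have a : 0 < 1 - θ₁ := by linarith
    have b : 0 < 1 - θ₂ := by linarith
    positivity
  rw [Phi, Phit]
  have e1 : t + (θ₁ - t) = θ₁ := by ring
  have e2 : t + (θ₂ - t) = θ₂ := by ring
  have e3 : θ₁ - t + (1 - θ₁ - θ₂ + t) = 1 - θ₂ := by ring
  have e4 : θ₂ - t + (1 - θ₁ - θ₂ + t) = 1 - θ₁ := by ring
  rw [e1, e2, e3, e4, ent_split t h11, ent_split (θ₁ - t) h12, ent_split (θ₂ - t) h21,
    ent_split (1 - θ₁ - θ₂ + t) h22]
  simp only [fA, cA, cB]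
  ring

lemma hda_sub (F : ℝ → ℝ) {d : ℝ} (c : ℝ) {y : ℝ} (h : HasDerivAt F d (c - y)) :
    HasDerivAt (fun t => F (c - t)) (-d) y := by
  have := h.comp y ((hasDerivAt_id y).const_sub c)
  simpa [Function.comp_def] using this

lemma hda_add (F : ℝ → ℝ) {d : ℝ} (c : ℝ) {y : ℝ} (h : HasDerivAt F d (c + y)) :
    HasDerivAt (fun t => F (c + t)) d y := by
  have := h.comp y ((hasDerivAt_id y).const_add c)
  simpa [Function.comp_def] using this

/-- For each `β ∈ ℝ` and `(θ₁,θ₂) ∈ (0,1)²`, the function `t ↦ Φ_β(θ₁,θ₂;t)` is strictly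
convex on `I_{θ₁,θ₂} = [max{0,θ₁+θ₂−1}, min{θ₁,θ₂}]`. -/
theorem statement5 (β θ₁ θ₂ : ℝ)
    (hθ₁ : θ₁ ∈ Set.Ioo (0:ℝ) 1) (hθ₂ : θ₂ ∈ Set.Ioo (0:ℝ) 1) :
    StrictConvexOn ℝ (Set.Icc (max 0 (θ₁ + θ₂ - 1)) (min θ₁ θ₂))
      (fun t => Phi β θ₁ θ₂ t) := by
  obtain ⟨h1p, h1l⟩ := hθ₁
  obtain ⟨h2p, h2l⟩ := hθ₂
  have heq : (fun t => Phi β θ₁ θ₂ t) = fun t => fA β t + fA β (θ₁ - t) + fA β (θ₂ - t)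
      + fA β (1 - θ₁ - θ₂ + t) + β * ((θ₁ - t) * (θ₂ - t)) + (cA θ₁ θ₂ * t + cB β θ₁ θ₂) :=
    funext (phi_decomp β h1p h1l h2p h2l)
  rw [heq]
  set lo := max 0 (θ₁ + θ₂ - 1) with hlo
  set hi := min θ₁ θ₂ with hhi
  set FD : ℝ → ℝ := fun s => fdA β s - fdA β (θ₁ - s) - fdA β (θ₂ - s)
    + fdA β (1 - θ₁ - θ₂ + s) + β * (2 * s - θ₁ - θ₂) + cA θ₁ θ₂ with hFD
  have hpos : ∀ x ∈ Set.Ioo lo hi, 0 < x ∧ 0 < θ₁ - x ∧ 0 < θ₂ - x ∧ 0 < 1 - θ₁ - θ₂ + x := by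
    intro x hx
    obtain ⟨ha, hb⟩ := hx
    have h0 : (0:ℝ) ≤ lo := le_max_left _ _
    have h1 : θ₁ + θ₂ - 1 ≤ lo := le_max_right _ _
    have h2 : hi ≤ θ₁ := min_le_left _ _
    have h3 : hi ≤ θ₂ := min_le_right _ _
    exact ⟨by linarith, by linarith, by linarith, by linarith⟩
  have key : ∀ x ∈ Set.Ioo lo hi, HasDerivAt (fun t => fA β t + fA β (θ₁ - t) + fA β (θ₂ - t)
      + fA β (1 - θ₁ - θ₂ + t) + β * ((θ₁ - t) * (θ₂ - t)) + (cA θ₁ θ₂ * t + cB β θ₁ θ₂))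
      (FD x) x := by
    intro x hx
    obtain ⟨hx0, hx1, hx2, hx3⟩ := hpos x hx
    have d1 : HasDerivAt (fA β) (fdA β x) x := hasDerivAt_fA hx0.ne'
    have d2 : HasDerivAt (fun t => fA β (θ₁ - t)) (-(fdA β (θ₁ - x))) x :=
      hda_sub (fA β) θ₁ (hasDerivAt_fA hx1.ne')
    have d3 : HasDerivAt (fun t => fA β (θ₂ - t)) (-(fdA β (θ₂ - x))) x :=
      hda_sub (fA β) θ₂ (hasDerivAt_fA hx2.ne')
    have d4 : HasDerivAt (fun t => fA β (1 - θ₁ - θ₂ + t)) (fdA β (1 - θ₁ - θ₂ + x)) x :=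
      hda_add (fA β) (1 - θ₁ - θ₂) (hasDerivAt_fA hx3.ne')
    have dq : HasDerivAt (fun t : ℝ => β * ((θ₁ - t) * (θ₂ - t))) (β * (2 * x - θ₁ - θ₂)) x := by
      have hq : HasDerivAt (fun t : ℝ => (θ₁ - t) * (θ₂ - t))
          ((-1) * (θ₂ - x) + (θ₁ - x) * (-1)) x :=
        ((hasDerivAt_id x).const_sub θ₁).fun_mul ((hasDerivAt_id x).const_sub θ₂)
      have h := hq.const_mul β
      exact h.congr_deriv (by ring)
    have dl : HasDerivAt (fun t : ℝ => cA θ₁ θ₂ * t + cB β θ₁ θ₂) (cA θ₁ θ₂) x := by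
      simpa using ((hasDerivAt_id x).const_mul (cA θ₁ θ₂)).add_const (cB β θ₁ θ₂)
    have htot := ((((d1.fun_add d2).fun_add d3).fun_add d4).fun_add dq).fun_add dl
    simp only [hFD]
    exact htot.congr_deriv (by ring)
  apply strictConvexOn_of_deriv2_pos (convex_Icc lo hi)
  · apply Continuous.continuousOn
    have h0 := continuous_fA β
    exact (((((h0).add (h0.comp (continuous_const.sub continuous_id))).add
      (h0.comp (continuous_const.sub continuous_id))).add
      (h0.comp (continuous_const.add continuous_id))).add
      (continuous_const.mul ((continuous_const.sub continuous_id).mul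
        (continuous_const.sub continuous_id)))).add
      ((continuous_const.mul continuous_id).add continuous_const)
  · intro x hx
    rw [interior_Icc] at hx
    obtain ⟨hx0, hx1, hx2, hx3⟩ := hpos x hx
    have hev : (deriv fun t => fA β t + fA β (θ₁ - t) + fA β (θ₂ - t)
        + fA β (1 - θ₁ - θ₂ + t) + β * ((θ₁ - t) * (θ₂ - t)) + (cA θ₁ θ₂ * t + cB β θ₁ θ₂))
        =ᶠ[nhds x] FD :=
      Filter.eventuallyEq_of_mem (isOpen_Ioo.mem_nhds hx) (fun s hs => (key s hs).deriv)
    have dFD : HasDerivAt FD (fddA β x + fddA β (θ₁ - x) + fddA β (θ₂ - x)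
        + fddA β (1 - θ₁ - θ₂ + x) + β * 2) x := by
      have e1 : HasDerivAt (fdA β) (fddA β x) x := hasDerivAt_fdA hx0
      have e2 : HasDerivAt (fun t => fdA β (θ₁ - t)) (-(fddA β (θ₁ - x))) x :=
        hda_sub (fdA β) θ₁ (hasDerivAt_fdA hx1)
      have e3 : HasDerivAt (fun t => fdA β (θ₂ - t)) (-(fddA β (θ₂ - x))) x :=
        hda_sub (fdA β) θ₂ (hasDerivAt_fdA hx2)
      have e4 : HasDerivAt (fun t => fdA β (1 - θ₁ - θ₂ + t)) (fddA β (1 - θ₁ - θ₂ + x)) x :=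
        hda_add (fdA β) (1 - θ₁ - θ₂) (hasDerivAt_fdA hx3)
      have e5 : HasDerivAt (fun t : ℝ => β * (2 * t - θ₁ - θ₂)) (β * 2) x := by
        have h : HasDerivAt (fun t : ℝ => 2 * t - θ₁ - θ₂) 2 x := by
          simpa using (((hasDerivAt_id x).const_mul (2:ℝ)).sub_const θ₁).sub_const θ₂
        simpa using h.const_mul β
      have htot := (((((e1.fun_sub e2).fun_sub e3).fun_add e4).fun_add e5).add_const (cA θ₁ θ₂))
      simp only [hFD]
      exact htot.congr_deriv (by ring)
    have h2 : deriv^[2] (fun t => fA β t + fA β (θ₁ - t) + fA β (θ₂ - t)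
        + fA β (1 - θ₁ - θ₂ + t) + β * ((θ₁ - t) * (θ₂ - t)) + (cA θ₁ θ₂ * t + cB β θ₁ θ₂)) x
        = deriv FD x := by
      simp only [Function.iterate_succ, Function.iterate_zero, Function.comp_apply, id_eq]
      exact hev.deriv_eq
    rw [h2, dFD.deriv]
    have p1 := fddA_add_pos (β := β) hx0
    have p2 := fddA_add_pos (β := β) hx1
    have p3 := fddA_pos (β := β) hx2
    have p4 := fddA_pos (β := β) hx3
    linarith

end
end

section
/- Suppose ν⁽⁰⁾ is a Borel probability measure on [0,1]² absolutely continuous with respect to Lebesgue measure λ⊗² with both marginals equal to Lebesgue measure λ, and G_X, G_Y : [0,1] → [0,1] are absolutely continuous probability distribution functions (nondecreasing, absolutely continuous, G(0)=0, G(1)=1). Let ν be the measure determined by ν([0,x]×[0,y]) = ν⁽⁰⁾([0,G_X(x)]×[0,G_Y(y)]) for all x,y ∈ [0,1]. Then ℰ(ν) = ℰ(ν⁽⁰⁾). -/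
open MeasureTheory Real Set Filter ENNReal
open scoped Classical

noncomputable section

open scoped Topology

instance : SFinite lamI := inferInstanceAs (SFinite (volume.restrict (Set.Icc (0:ℝ) 1)))

namespace Statement9Aux

/-- clamp to `[0,1]` -/
def clampI (x : ℝ) : ℝ := max 0 (min x 1)

lemma clampI_mem (x : ℝ) : clampI x ∈ Icc (0:ℝ) 1 :=
  ⟨le_max_left _ _, max_le (by norm_num) (min_le_right _ _)⟩

lemma clampI_eq {x : ℝ} (hx : x ∈ Icc (0:ℝ) 1) : clampI x = x := by
  unfold clampI; rw [min_eq_left hx.2, max_eq_right hx.1]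

lemma clampI_mono : Monotone clampI := fun a b h =>
  max_le_max le_rfl (min_le_min h le_rfl)

lemma clampI_idem (x : ℝ) : clampI (clampI x) = clampI x := clampI_eq (clampI_mem x)

variable {g : ℝ → ℝ}

/-- clamped primitive -/
def primc (g : ℝ → ℝ) (x : ℝ) : ℝ := ∫ t in (0:ℝ)..(clampI x), g t

lemma primc_continuous (hgint : IntegrableOn g (Icc (0:ℝ) 1)) : Continuous (primc g) := by
  have h1 : ContinuousOn (fun u => ∫ t in (0:ℝ)..u, g t) (Icc (0:ℝ) 1) := by
    have := intervalIntegral.continuousOn_primitive_interval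
      (a := (0:ℝ)) (b := 1) (μ := volume) (f := g) ?_
    · simpa [uIcc_of_le (zero_le_one (α := ℝ))] using this
    · simpa [uIcc_of_le (zero_le_one (α := ℝ))] using hgint
  exact h1.comp_continuous
    (continuous_const.max (continuous_id.min continuous_const)) clampI_mem

lemma primc_mono (hg0 : ∀ t, 0 ≤ g t) (hgint : IntegrableOn g (Icc (0:ℝ) 1)) :
    Monotone (primc g) := by
  intro x y hxy
  have hii : IntervalIntegrable g volume 0 1 := by
    rw [intervalIntegrable_iff_integrableOn_Ioc_of_le zero_le_one]
    exact hgint.mono_set Ioc_subset_Icc_self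
  set u := clampI x with hu
  set v := clampI y with hv
  have huv : u ≤ v := clampI_mono hxy
  have hum := clampI_mem x
  have hvm := clampI_mem y
  have h1 : IntervalIntegrable g volume 0 u := by
    refine hii.mono_set ?_
    rw [uIcc_of_le hum.1, uIcc_of_le (zero_le_one (α := ℝ))]
    exact Icc_subset_Icc le_rfl hum.2
  have h2 : IntervalIntegrable g volume u v := by
    refine hii.mono_set ?_
    rw [uIcc_of_le huv, uIcc_of_le (zero_le_one (α := ℝ))]
    exact Icc_subset_Icc hum.1 hvm.2
  have hadd := intervalIntegral.integral_add_adjacent_intervals h1 h2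
  have hnn : 0 ≤ ∫ t in u..v, g t :=
    intervalIntegral.integral_nonneg huv (fun t _ => hg0 t)
  show (∫ t in (0:ℝ)..u, g t) ≤ ∫ t in (0:ℝ)..v, g t
  linarith

/-- Level set structure for a continuous monotone map. -/
lemma level_set {G : ℝ → ℝ} (hc : Continuous G) (hm : Monotone G)
    (h0 : G 0 = 0) (h1 : G 1 = 1) {a : ℝ} (ha : a ∈ Icc (0:ℝ) 1) :
    ∃ c ∈ Icc (0:ℝ) 1, G c = a ∧ (Icc (0:ℝ) 1 ∩ G ⁻¹' Iic a) = Icc 0 c := by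
  set P : Set ℝ := Icc (0:ℝ) 1 ∩ G ⁻¹' Iic a with hP
  have hPne : P.Nonempty := ⟨0, ⟨le_rfl, zero_le_one⟩, by simp [h0, ha.1]⟩
  have hPc : IsClosed P := isClosed_Icc.inter (isClosed_Iic.preimage hc)
  have hbdd : BddAbove P := ⟨1, fun x hx => hx.1.2⟩
  set c := sSup P with hc'
  have hcP : c ∈ P := hPc.csSup_mem hPne hbdd
  have hcI : c ∈ Icc (0:ℝ) 1 := hcP.1
  have hGca : G c ≤ a := hcP.2
  have hGc : G c = a := by
    refine le_antisymm hGca ?_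
    rcases eq_or_lt_of_le hcI.2 with hc1 | hc1
    · rw [hc1, h1]; exact ha.2
    · by_contra hlt
      push_neg at hlt
      have hev1 : ∀ᶠ x in 𝓝[>] c, G x < a :=
        ((hc.continuousAt).mono_left nhdsWithin_le_nhds).eventually_lt_const hlt
      have hev2 : ∀ᶠ x in 𝓝[>] c, x < 1 :=
        (eventually_lt_nhds hc1).filter_mono nhdsWithin_le_nhds
      have hev3 : ∀ᶠ x in 𝓝[>] c, c < x := eventually_mem_nhdsWithin
      obtain ⟨x, hx1, hx2, hx3⟩ := (hev1.and (hev2.and hev3)).exists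
      have hxP : x ∈ P := ⟨⟨le_trans hcI.1 hx3.le, hx2.le⟩, hx1.le⟩
      exact absurd (le_csSup hbdd hxP) (not_le.2 hx3)
  refine ⟨c, hcI, hGc, ?_⟩
  ext x
  constructor
  · rintro ⟨hx1, hx2⟩
    exact ⟨hx1.1, le_csSup hbdd ⟨hx1, hx2⟩⟩
  · rintro ⟨hx0, hxc⟩
    exact ⟨⟨hx0, le_trans hxc hcI.2⟩, by simpa [hGc] using hm hxc⟩

end Statement9Aux

open Statement9Aux in
/-- Energy invariance under the rescaling `ν([0,x]×[0,y]) = ν⁽⁰⁾([0,G_X(x)]×[0,G_Y(y)])`: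
`ℰ(ν) = ℰ(ν⁽⁰⁾)`. -/
theorem statement9 (ν₀ ν : Measure (ℝ × ℝ)) (GX GY gX gY : ℝ → ℝ)
    [IsProbabilityMeasure ν₀] [IsProbabilityMeasure ν]
    (hac : ν₀ ≪ lam2)
    (hmargX : ν₀.map Prod.fst = lamI) (hmargY : ν₀.map Prod.snd = lamI)
    -- `G_X` is an absolutely continuous distribution function with density `g_X`:
    (hgX0 : ∀ t, 0 ≤ gX t) (hgXint : IntegrableOn gX (Set.Icc (0:ℝ) 1))
    (hGX : ∀ x ∈ Set.Icc (0:ℝ) 1, GX x = ∫ t in (0:ℝ)..x, gX t)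
    (hGX0 : GX 0 = 0) (hGX1 : GX 1 = 1)
    (hGXmem : ∀ x ∈ Set.Icc (0:ℝ) 1, GX x ∈ Set.Icc (0:ℝ) 1)
    -- `G_Y` is an absolutely continuous distribution function with density `g_Y`:
    (hgY0 : ∀ t, 0 ≤ gY t) (hgYint : IntegrableOn gY (Set.Icc (0:ℝ) 1))
    (hGY : ∀ y ∈ Set.Icc (0:ℝ) 1, GY y = ∫ t in (0:ℝ)..y, gY t)
    (hGY0 : GY 0 = 0) (hGY1 : GY 1 = 1)
    (hGYmem : ∀ y ∈ Set.Icc (0:ℝ) 1, GY y ∈ Set.Icc (0:ℝ) 1)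
    -- `ν` is the measure on `[0,1]²` determined by the rescaling:
    (hsupp : ν ((Set.Icc (0:ℝ) 1 ×ˢ Set.Icc (0:ℝ) 1)ᶜ) = 0)
    (hν : ∀ x ∈ Set.Icc (0:ℝ) 1, ∀ y ∈ Set.Icc (0:ℝ) 1,
      ν (Set.Icc 0 x ×ˢ Set.Icc 0 y) = ν₀ (Set.Icc 0 (GX x) ×ˢ Set.Icc 0 (GY y))) :
    energy ν = energy ν₀ := by
  classical
  set GX' : ℝ → ℝ := primc gX with hGX'def
  set GY' : ℝ → ℝ := primc gY with hGY'def
  have hGX'eq : ∀ x ∈ Icc (0:ℝ) 1, GX' x = GX x := by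
    intro x hx
    rw [hGX x hx, hGX'def]
    simp [primc, clampI_eq hx]
  have hGY'eq : ∀ y ∈ Icc (0:ℝ) 1, GY' y = GY y := by
    intro y hy
    rw [hGY y hy, hGY'def]
    simp [primc, clampI_eq hy]
  have contX : Continuous GX' := primc_continuous hgXint
  have contY : Continuous GY' := primc_continuous hgYint
  have monoX : Monotone GX' := primc_mono hgX0 hgXint
  have monoY : Monotone GY' := primc_mono hgY0 hgYint
  have hmem01 : (0:ℝ) ∈ Icc (0:ℝ) 1 := ⟨le_rfl, zero_le_one⟩
  have hmem11 : (1:ℝ) ∈ Icc (0:ℝ) 1 := ⟨zero_le_one, le_rfl⟩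
  have hX0 : GX' 0 = 0 := by rw [hGX'eq 0 hmem01, hGX0]
  have hX1 : GX' 1 = 1 := by rw [hGX'eq 1 hmem11, hGX1]
  have hY0 : GY' 0 = 0 := by rw [hGY'eq 0 hmem01, hGY0]
  have hY1 : GY' 1 = 1 := by rw [hGY'eq 1 hmem11, hGY1]
  have hXmem : ∀ x, GX' x ∈ Icc (0:ℝ) 1 := by
    intro x
    have h : GX' x = GX' (clampI x) := by
      simp [hGX'def, primc, clampI_idem]
    rw [h, hGX'eq _ (clampI_mem x)]
    exact hGXmem _ (clampI_mem x)
  have hYmem : ∀ y, GY' y ∈ Icc (0:ℝ) 1 := by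
    intro y
    have h : GY' y = GY' (clampI y) := by
      simp [hGY'def, primc, clampI_idem]
    rw [h, hGY'eq _ (clampI_mem y)]
    exact hGYmem _ (clampI_mem y)
  set T : ℝ × ℝ → ℝ × ℝ := fun p => (GX' p.1, GY' p.2) with hTdef
  have hTmeas : Measurable T :=
    ((contX.comp continuous_fst).prodMk (contY.comp continuous_snd)).measurable
  set K : Set (ℝ × ℝ) := Icc (0:ℝ) 1 ×ˢ Icc (0:ℝ) 1 with hKdef
  have hνKc : ν Kᶜ = 0 := hsupp
  have hlamIc : lamI (Icc (0:ℝ) 1)ᶜ = 0 := by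
    rw [lamI, Measure.restrict_apply measurableSet_Icc.compl, compl_inter_self]
    simp
  have hlamKc : lam2 Kᶜ = 0 := by
    rw [hKdef, Set.compl_prod_eq_union]
    refine measure_union_null ?_ ?_ <;> rw [lam2, Measure.prod_prod] <;>
      simp [hlamIc]
  have hν₀Kc : ν₀ Kᶜ = 0 := hac hlamKc
  -- the pushforward identity
  have hspan : IsCountablySpanning (range (Iic : ℝ → Set ℝ)) := by
    refine ⟨fun n => Iic (n : ℝ), fun n => mem_range_self _, ?_⟩
    ext x
    simp only [mem_iUnion, mem_Iic, mem_univ, iff_true]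
    exact ⟨⌈x⌉₊, Nat.le_ceil x⟩
  have hgen : (inferInstance : MeasurableSpace (ℝ × ℝ)) =
      MeasurableSpace.generateFrom
        (image2 (· ×ˢ ·) (range (Iic : ℝ → Set ℝ)) (range (Iic : ℝ → Set ℝ))) := by
    have hR : (inferInstance : MeasurableSpace ℝ) =
        MeasurableSpace.generateFrom (range (Iic : ℝ → Set ℝ)) :=
      (BorelSpace.measurable_eq (α := ℝ)).trans (borel_eq_generateFrom_Iic ℝ)
    have h := generateFrom_prod_eq hspan hspan
    rw [← hR] at h
    exact h
  have hmap : ν.map T = ν₀ := by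
    haveI hprob : IsProbabilityMeasure (ν.map T) :=
      Measure.isProbabilityMeasure_map hTmeas.aemeasurable
    refine MeasureTheory.ext_of_generate_finite _ hgen ?_ ?_ ?_
    · rintro _ ⟨_, ⟨a, rfl⟩, _, ⟨b, rfl⟩, rfl⟩ _ ⟨_, ⟨a', rfl⟩, _, ⟨b', rfl⟩, rfl⟩ _
      rw [Set.prod_inter_prod, Set.Iic_inter_Iic, Set.Iic_inter_Iic]
      exact mem_image2_of_mem (mem_range_self _) (mem_range_self _)
    · rintro _ ⟨_, ⟨a, rfl⟩, _, ⟨b, rfl⟩, rfl⟩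
      rw [Measure.map_apply hTmeas (measurableSet_Iic.prod measurableSet_Iic)]
      have hpre : T ⁻¹' (Iic a ×ˢ Iic b) = (GX' ⁻¹' Iic a) ×ˢ (GY' ⁻¹' Iic b) := rfl
      rw [hpre]
      rw [← measure_inter_conull (μ := ν) (t := K) hνKc,
        ← measure_inter_conull (μ := ν₀) (t := K) hν₀Kc]
      rw [hKdef, Set.prod_inter_prod, Set.prod_inter_prod]
      by_cases ha0 : 0 ≤ a
      · by_cases hb0 : 0 ≤ b
        · obtain ⟨c, hcI, hGc, hPc⟩ := level_set contX monoX hX0 hX1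
            (a := min a 1) ⟨le_min ha0 zero_le_one, min_le_right _ _⟩
          obtain ⟨d, hdI, hGd, hPd⟩ := level_set contY monoY hY0 hY1
            (a := min b 1) ⟨le_min hb0 zero_le_one, min_le_right _ _⟩
          have e1 : GX' ⁻¹' Iic a ∩ Icc (0:ℝ) 1 = Icc 0 c := by
            rw [← hPc]
            ext x
            simp only [mem_inter_iff, mem_preimage, mem_Iic]
            constructor
            · rintro ⟨h1, h2⟩; exact ⟨h2, le_min h1 (hXmem x).2⟩
            · rintro ⟨h1, h2⟩; exact ⟨le_trans h2 (min_le_left _ _), h1⟩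
          have e2 : GY' ⁻¹' Iic b ∩ Icc (0:ℝ) 1 = Icc 0 d := by
            rw [← hPd]
            ext y
            simp only [mem_inter_iff, mem_preimage, mem_Iic]
            constructor
            · rintro ⟨h1, h2⟩; exact ⟨h2, le_min h1 (hYmem y).2⟩
            · rintro ⟨h1, h2⟩; exact ⟨le_trans h2 (min_le_left _ _), h1⟩
          have e3 : Iic a ∩ Icc (0:ℝ) 1 = Icc 0 (min a 1) := by
            ext x
            simp only [mem_inter_iff, mem_Iic, mem_Icc, le_min_iff]
            constructor
            · rintro ⟨h1, h2, h3⟩; exact ⟨h2, h1, h3⟩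
            · rintro ⟨h1, h2, h3⟩; exact ⟨h2, h1, h3⟩
          have e4 : Iic b ∩ Icc (0:ℝ) 1 = Icc 0 (min b 1) := by
            ext y
            simp only [mem_inter_iff, mem_Iic, mem_Icc, le_min_iff]
            constructor
            · rintro ⟨h1, h2, h3⟩; exact ⟨h2, h1, h3⟩
            · rintro ⟨h1, h2, h3⟩; exact ⟨h2, h1, h3⟩
          rw [e1, e2, e3, e4, hν c hcI d hdI]
          have eGc : GX c = min a 1 := by rw [← hGX'eq c hcI]; exact hGc
          have eGd : GY d = min b 1 := by rw [← hGY'eq d hdI]; exact hGd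
          rw [eGc, eGd]
        · push_neg at hb0
          have e0 : GY' ⁻¹' Iic b = (∅ : Set ℝ) := by
            ext y
            simp only [mem_preimage, mem_Iic, mem_empty_iff_false, iff_false, not_le]
            exact lt_of_lt_of_le hb0 (hYmem y).1
          have e0' : Iic b ∩ Icc (0:ℝ) 1 = (∅ : Set ℝ) := by
            ext y
            simp only [mem_inter_iff, mem_Iic, mem_Icc, mem_empty_iff_false, iff_false]
            rintro ⟨h1, h2, h3⟩
            exact absurd (le_trans h2 h1) (not_le.2 hb0)
          rw [e0', e0]
          simp
      · push_neg at ha0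
        have e0 : GX' ⁻¹' Iic a = (∅ : Set ℝ) := by
          ext x
          simp only [mem_preimage, mem_Iic, mem_empty_iff_false, iff_false, not_le]
          exact lt_of_lt_of_le ha0 (hXmem x).1
        have e0' : Iic a ∩ Icc (0:ℝ) 1 = (∅ : Set ℝ) := by
          ext x
          simp only [mem_inter_iff, mem_Iic, mem_Icc, mem_empty_iff_false, iff_false]
          rintro ⟨h1, h2, h3⟩
          exact absurd (le_trans h2 h1) (not_le.2 ha0)
        rw [e0, e0']
        simp
    · simp [measure_univ]
  -- bad value sets
  set N : Set ℝ :=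
    {v | ∃ x ∈ Icc (0:ℝ) 1, ∃ y ∈ Icc (0:ℝ) 1, x < y ∧ GX' x = v ∧ GX' y = v} with hNdef
  set M : Set ℝ :=
    {v | ∃ x ∈ Icc (0:ℝ) 1, ∃ y ∈ Icc (0:ℝ) 1, x < y ∧ GY' x = v ∧ GY' y = v} with hMdef
  have hNc : N.Countable := by
    refine Set.Countable.mono ?_ (Set.countable_range fun q : ℚ => GX' (q : ℝ))
    rintro v ⟨x, hx, y, hy, hxy, hvx, hvy⟩
    obtain ⟨r, hr1, hr2⟩ := exists_rat_btwn hxy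
    exact ⟨r, le_antisymm ((monoX hr2.le).trans_eq hvy) (hvx ▸ monoX hr1.le)⟩
  have hMc : M.Countable := by
    refine Set.Countable.mono ?_ (Set.countable_range fun q : ℚ => GY' (q : ℝ))
    rintro v ⟨x, hx, y, hy, hxy, hvx, hvy⟩
    obtain ⟨r, hr1, hr2⟩ := exists_rat_btwn hxy
    exact ⟨r, le_antisymm ((monoY hr2.le).trans_eq hvy) (hvx ▸ monoY hr1.le)⟩
  have hνNX : ν {p : ℝ × ℝ | GX' p.1 ∈ N} = 0 := by
    have h1 : {p : ℝ × ℝ | GX' p.1 ∈ N} = T ⁻¹' (N ×ˢ univ) := by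
      ext p; simp [hTdef]
    rw [h1, ← Measure.map_apply hTmeas (hNc.measurableSet.prod MeasurableSet.univ), hmap,
      Set.prod_univ, ← Measure.map_apply measurable_fst hNc.measurableSet, hmargX,
      lamI, Measure.restrict_apply' measurableSet_Icc]
    exact measure_mono_null inter_subset_left (hNc.measure_zero _)
  have hνNY : ν {p : ℝ × ℝ | GY' p.2 ∈ M} = 0 := by
    have h1 : {p : ℝ × ℝ | GY' p.2 ∈ M} = T ⁻¹' (univ ×ˢ M) := by
      ext p; simp [hTdef]
    rw [h1, ← Measure.map_apply hTmeas (MeasurableSet.univ.prod hMc.measurableSet), hmap,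
      Set.univ_prod, ← Measure.map_apply measurable_snd hMc.measurableSet, hmargY,
      lamI, Measure.restrict_apply' measurableSet_Icc]
    exact measure_mono_null inter_subset_left (hMc.measure_zero _)
  -- the energy computation
  set H : (ℝ × ℝ) × (ℝ × ℝ) → ℝ := fun z => hfun z.1 z.2 with hHdef
  have hHmeas : Measurable H := by
    have h : H = fun z : (ℝ × ℝ) × (ℝ × ℝ) =>
        if (z.1.1 - z.2.1) * (z.1.2 - z.2.2) < 0 then (1:ℝ) else 0 := rfl
    rw [h]
    refine Measurable.ite ?_ measurable_const measurable_const
    exact measurableSet_lt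
      ((measurable_fst.fst.sub measurable_snd.fst).mul
        (measurable_fst.snd.sub measurable_snd.snd)) measurable_const
  have hint : ∀ (μ : Measure (ℝ × ℝ)), IsProbabilityMeasure μ →
      Integrable H (μ.prod μ) := by
    intro μ hμ
    haveI := hμ
    refine (integrable_const (1:ℝ)).mono' hHmeas.aestronglyMeasurable ?_
    refine Eventually.of_forall fun z => ?_
    have h : H z = if (z.1.1 - z.2.1) * (z.1.2 - z.2.2) < 0 then (1:ℝ) else 0 := rfl
    rw [h]
    split <;> simp
  have hen : ∀ (μ : Measure (ℝ × ℝ)), IsProbabilityMeasure μ →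
      energy μ = (1/2) * ∫ z, H z ∂(μ.prod μ) := by
    intro μ hμ
    haveI := hμ
    rw [energy, MeasureTheory.integral_integral (f := fun p q : ℝ × ℝ => hfun p q)
      (hint μ hμ)]
  have hprodmap : ν₀.prod ν₀ = (ν.prod ν).map (Prod.map T T) := by
    rw [← hmap]
    exact Measure.map_prod_map ν ν hTmeas hTmeas
  have hgood : ∀ᵐ z ∂(ν.prod ν),
      z.1 ∈ K ∧ z.2 ∈ K ∧ GX' z.1.1 ∉ N ∧ GY' z.1.2 ∉ M := by
    rw [ae_iff]
    refine measure_mono_null (t := (Kᶜ ×ˢ univ) ∪ (univ ×ˢ Kᶜ) ∪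
      ({p : ℝ × ℝ | GX' p.1 ∈ N} ×ˢ univ) ∪ ({p : ℝ × ℝ | GY' p.2 ∈ M} ×ˢ univ)) ?_ ?_
    · intro z hz
      simp only [mem_setOf_eq, not_and_or, not_not] at hz
      simp only [mem_union, mem_prod, mem_univ, and_true, mem_compl_iff, mem_setOf_eq]
      tauto
    · refine measure_union_null (measure_union_null (measure_union_null ?_ ?_) ?_) ?_ <;>
        rw [Measure.prod_prod] <;> simp [hνKc, hνNX, hνNY]
  have hae : (fun z => H (Prod.map T T z)) =ᵐ[ν.prod ν] H := by
    filter_upwards [hgood] with z hz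
    obtain ⟨h1, h2, h3, h4⟩ := hz
    have h1x : z.1.1 ∈ Icc (0:ℝ) 1 := (mem_prod.mp h1).1
    have h1y : z.1.2 ∈ Icc (0:ℝ) 1 := (mem_prod.mp h1).2
    have h2x : z.2.1 ∈ Icc (0:ℝ) 1 := (mem_prod.mp h2).1
    have h2y : z.2.2 ∈ Icc (0:ℝ) 1 := (mem_prod.mp h2).2
    have hiff : (GX' z.1.1 - GX' z.2.1) * (GY' z.1.2 - GY' z.2.2) < 0 ↔
        (z.1.1 - z.2.1) * (z.1.2 - z.2.2) < 0 := by
      rw [mul_neg_iff, mul_neg_iff]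
      simp only [sub_pos, sub_neg]
      constructor
      · rintro (⟨ha, hb⟩ | ⟨ha, hb⟩)
        · exact Or.inl ⟨monoX.reflect_lt ha, monoY.reflect_lt hb⟩
        · exact Or.inr ⟨monoX.reflect_lt ha, monoY.reflect_lt hb⟩
      · have keyX : z.2.1 < z.1.1 → GX' z.2.1 < GX' z.1.1 := by
          intro h
          rcases lt_or_eq_of_le (monoX h.le) with h' | h'
          · exact h'
          · exact absurd ⟨z.2.1, h2x, z.1.1, h1x, h, h', rfl⟩ h3
        have keyX' : z.1.1 < z.2.1 → GX' z.1.1 < GX' z.2.1 := by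
          intro h
          rcases lt_or_eq_of_le (monoX h.le) with h' | h'
          · exact h'
          · exact absurd ⟨z.1.1, h1x, z.2.1, h2x, h, rfl, h'.symm⟩ h3
        have keyY : z.2.2 < z.1.2 → GY' z.2.2 < GY' z.1.2 := by
          intro h
          rcases lt_or_eq_of_le (monoY h.le) with h' | h'
          · exact h'
          · exact absurd ⟨z.2.2, h2y, z.1.2, h1y, h, h', rfl⟩ h4
        have keyY' : z.1.2 < z.2.2 → GY' z.1.2 < GY' z.2.2 := by
          intro h
          rcases lt_or_eq_of_le (monoY h.le) with h' | h'
          · exact h'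
          · exact absurd ⟨z.1.2, h1y, z.2.2, h2y, h, rfl, h'.symm⟩ h4
        rintro (⟨ha, hb⟩ | ⟨ha, hb⟩)
        · exact Or.inl ⟨keyX ha, keyY' hb⟩
        · exact Or.inr ⟨keyX' ha, keyY hb⟩
    show (if (GX' z.1.1 - GX' z.2.1) * (GY' z.1.2 - GY' z.2.2) < 0 then (1:ℝ) else 0) =
      (if (z.1.1 - z.2.1) * (z.1.2 - z.2.2) < 0 then (1:ℝ) else 0)
    exact if_congr hiff rfl rfl
  have hfinal : energy ν₀ = energy ν := by
    rw [hen ν₀ inferInstance, hen ν inferInstance, hprodmap,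
      integral_map (hTmeas.prodMap hTmeas).aemeasurable hHmeas.aestronglyMeasurable,
      integral_congr_ae hae]
  exact hfinal.symm

end
end

section
/- Let β ≠ 0 and (θ₁,θ₂) ∈ (0,1)². For every t in the open interval (max{0,θ₁+θ₂−1}, min{θ₁,θ₂}), the second derivative of t ↦ Φ_β(θ₁,θ₂;t) equals Σ_{i,j=1}^{2} β/(2 tanh(β t_{ij}/2)), where t₁₁ = t, t₁₂ = θ₁ − t, t₂₁ = θ₂ − t, t₂₂ = 1 − θ₁ − θ₂ + t. -/
open MeasureTheory Real Set Filter ENNReal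
open scoped Classical
open scoped Topology

noncomputable section

namespace S15aux

def fI (β y : ℝ) : ℝ := Real.log ((1 - Real.exp (-β * y)) / (β * y))

lemma one_sub_exp_ne {x : ℝ} (hx : x ≠ 0) : 1 - Real.exp x ≠ 0 := by
  intro h
  have h1 : Real.exp x = 1 := by linarith
  exact hx (by simpa using h1)

lemma fI_continuous {β : ℝ} (hβ : β ≠ 0) : Continuous (fI β) := by
  rw [continuous_iff_continuousAt]
  intro y
  rcases eq_or_ne y 0 with rfl | hy
  · have h0 : fI β 0 = 0 := by simp [fI]
    rw [ContinuousAt, h0]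
    have hA : Tendsto (fI β) (𝓝[≠] (0:ℝ)) (𝓝 0) := by
      have hslope : Tendsto (fun u : ℝ => (Real.exp u - 1) / u) (𝓝[≠] (0:ℝ)) (𝓝 1) := by
        have h := hasDerivAt_iff_tendsto_slope.mp (Real.hasDerivAt_exp 0)
        simpa [slope_fun_def, Real.exp_zero, div_eq_inv_mul] using h
      have hmap : Tendsto (fun y : ℝ => -(β * y)) (𝓝[≠] (0:ℝ)) (𝓝[≠] (0:ℝ)) := by
        apply tendsto_nhdsWithin_of_tendsto_nhds_of_eventually_within
        · have hc : Tendsto (fun y : ℝ => -(β * y)) (𝓝 0) (𝓝 (-(β * 0))) :=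
            ((continuous_const.mul continuous_id).neg).tendsto 0
          exact (by simpa using hc : Tendsto (fun y : ℝ => -(β * y)) (𝓝 0) (𝓝 0)).mono_left nhdsWithin_le_nhds
        · filter_upwards [self_mem_nhdsWithin] with z hz
          simp only [mem_compl_iff, mem_singleton_iff] at hz ⊢
          simp [hβ, hz]
      have h2 : Tendsto (fun y : ℝ => (Real.exp (-(β * y)) - 1) / (-(β * y)))
          (𝓝[≠] (0:ℝ)) (𝓝 1) := hslope.comp hmap
      have h3 : Tendsto (fun y : ℝ => (1 - Real.exp (-β * y)) / (β * y))
          (𝓝[≠] (0:ℝ)) (𝓝 1) := by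
        refine h2.congr (fun z => ?_)
        rw [div_neg, ← neg_div, neg_sub, neg_mul]
      have h4 := ((Real.continuousAt_log one_ne_zero).tendsto).comp h3
      have he : fI β = fun z : ℝ => Real.log ((1 - Real.exp (-(β * z))) / (β * z)) := by
        funext z; simp [fI, neg_mul]
      rw [he]
      simpa [Function.comp_def, Real.log_one] using h4
    have hB : Tendsto (fI β) (pure (0:ℝ)) (𝓝 0) := by
      rw [tendsto_pure_left]
      intro s hs
      simpa [h0] using mem_of_mem_nhds hs
    have hT : Tendsto (fI β) (𝓝[≠] (0:ℝ) ⊔ pure 0) (𝓝 0) := tendsto_sup.mpr ⟨hA, hB⟩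
    exact hT.mono_left (le_of_eq (nhdsNE_sup_pure 0).symm)
  · have hc1 : ContinuousAt (fun y : ℝ => 1 - Real.exp (-β * y)) y :=
      (continuous_const.sub (Real.continuous_exp.comp (continuous_const.mul continuous_id))).continuousAt
    have hc2 : ContinuousAt (fun y : ℝ => β * y) y :=
      (continuous_const.mul continuous_id).continuousAt
    have hne' : -β * y ≠ 0 := mul_ne_zero (neg_ne_zero.mpr hβ) hy
    exact ContinuousAt.log (hc1.div hc2 (mul_ne_zero hβ hy))
      (div_ne_zero (one_sub_exp_ne hne') (mul_ne_zero hβ hy))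

lemma key1 {β : ℝ} (hβ : β ≠ 0) (u : ℝ) :
    u * pP (β * u) = ∫ y in (0:ℝ)..u, fI β y := by
  rcases eq_or_ne u 0 with rfl | hu
  · simp
  · have hbu : β * u ≠ 0 := mul_ne_zero hβ hu
    rw [pP, if_neg hbu]
    have h1 : (∫ x in (0:ℝ)..1, Real.log ((1 - Real.exp (-(β * u) * x)) / (β * u * x)))
        = ∫ x in (0:ℝ)..1, fI β (u * x) := by
      apply intervalIntegral.integral_congr
      intro x _
      simp only [fI]
      ring_nf
    rw [h1]
    have h2 := intervalIntegral.smul_integral_comp_mul_left (f := fI β) (a := 0) (b := 1) u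
    simpa [smul_eq_mul] using h2

lemma hasDerivAt_F {β : ℝ} (hβ : β ≠ 0) (u : ℝ) :
    HasDerivAt (fun v => ∫ y in (0:ℝ)..v, fI β y) (fI β u) u :=
  intervalIntegral.integral_hasDerivAt_right ((fI_continuous hβ).intervalIntegrable 0 u)
    ((fI_continuous hβ).stronglyMeasurableAtFilter _ _) (fI_continuous hβ).continuousAt

end S15aux
namespace S15aux

lemma hasDerivAt_fI {β u : ℝ} (hβ : β ≠ 0) (hu : u ≠ 0) :
    HasDerivAt (fI β) (β * Real.exp (-β * u) / (1 - Real.exp (-β * u)) - 1 / u) u := by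
  have hbu : β * u ≠ 0 := mul_ne_zero hβ hu
  have hnbu : -β * u ≠ 0 := mul_ne_zero (neg_ne_zero.mpr hβ) hu
  have h1 : HasDerivAt (fun v : ℝ => Real.log (1 - Real.exp (-β * v)))
      (β * Real.exp (-β * u) / (1 - Real.exp (-β * u))) u := by
    have hl : HasDerivAt (fun v : ℝ => -β * v) (-β) u := by simpa using (hasDerivAt_id u).const_mul (-β)
    have he : HasDerivAt (fun v : ℝ => Real.exp (-β * v)) (Real.exp (-β * u) * (-β)) u :=
      (Real.hasDerivAt_exp (-β * u)).comp u hl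
    have hs : HasDerivAt (fun v : ℝ => 1 - Real.exp (-β * v)) (0 - Real.exp (-β * u) * (-β)) u :=
      (hasDerivAt_const u (1:ℝ)).sub he
    have hlog := hs.log (one_sub_exp_ne hnbu)
    convert hlog using 1
    ring
  have h2 : HasDerivAt (fun v : ℝ => Real.log (β * v)) (1 / u) u := by
    have hl : HasDerivAt (fun v : ℝ => β * v) β u := by simpa using (hasDerivAt_id u).const_mul β
    have := hl.log hbu
    convert this using 1
    field_simp
  have h3 := h1.sub h2
  apply h3.congr_of_eventuallyEq
  filter_upwards [eventually_ne_nhds hu] with v hv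
  rw [fI, Real.log_div (one_sub_exp_ne (mul_ne_zero (neg_ne_zero.mpr hβ) hv)) (mul_ne_zero hβ hv)]
  rfl

lemma hasDerivAt_xlog {c x : ℝ} (hc : c ≠ 0) (hx : x ≠ 0) :
    HasDerivAt (fun s : ℝ => s * Real.log (s / c)) (Real.log (x / c) + 1) x := by
  have hd : HasDerivAt (fun s : ℝ => s / c) (1 / c) x := by simpa using (hasDerivAt_id x).div_const c
  have hlog : HasDerivAt (fun s : ℝ => Real.log (s / c)) ((1 / c) / (x / c)) x :=
    hd.log (div_ne_zero hx hc)
  have := (hasDerivAt_id x).mul hlog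
  refine this.congr_deriv ?_
  field_simp
  simp only [id]
  ring

lemma Phi_eq {β : ℝ} (θ₁ θ₂ : ℝ) (hβ : β ≠ 0) :
    (fun s => Phi β θ₁ θ₂ s) = fun s =>
      (pP β - θ₁ * pP (β * θ₁) - θ₂ * pP (β * θ₂)
        - (1 - θ₂) * pP (β * (1 - θ₂)) - (1 - θ₁) * pP (β * (1 - θ₁)))
      + s * Real.log (s / (θ₁ * θ₂))
      + (θ₁ - s) * Real.log ((θ₁ - s) / (θ₁ * (1 - θ₂)))
      + (θ₂ - s) * Real.log ((θ₂ - s) / ((1 - θ₁) * θ₂))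
      + (1 - θ₁ - θ₂ + s) * Real.log ((1 - θ₁ - θ₂ + s) / ((1 - θ₁) * (1 - θ₂)))
      + (∫ y in (0:ℝ)..s, fI β y) + (∫ y in (0:ℝ)..(θ₁ - s), fI β y)
      + (∫ y in (0:ℝ)..(θ₂ - s), fI β y) + (∫ y in (0:ℝ)..(1 - θ₁ - θ₂ + s), fI β y)
      + β * (θ₁ - s) * (θ₂ - s) := by
  funext s
  have e1 : s + (θ₁ - s) = θ₁ := by ring
  have e2 : s + (θ₂ - s) = θ₂ := by ring
  have e3 : (θ₁ - s) + (1 - θ₁ - θ₂ + s) = 1 - θ₂ := by ring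
  have e4 : (θ₂ - s) + (1 - θ₁ - θ₂ + s) = 1 - θ₁ := by ring
  simp only [Phi, Phit]
  rw [e1, e2, e3, e4, key1 hβ s, key1 hβ (θ₁ - s), key1 hβ (θ₂ - s), key1 hβ (1 - θ₁ - θ₂ + s)]
  ring

def Phi' (β θ₁ θ₂ s : ℝ) : ℝ :=
  Real.log (s / (θ₁ * θ₂)) - Real.log ((θ₁ - s) / (θ₁ * (1 - θ₂)))
  - Real.log ((θ₂ - s) / ((1 - θ₁) * θ₂))
  + Real.log ((1 - θ₁ - θ₂ + s) / ((1 - θ₁) * (1 - θ₂)))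
  + fI β s - fI β (θ₁ - s) - fI β (θ₂ - s) + fI β (1 - θ₁ - θ₂ + s)
  + β * (2 * s - θ₁ - θ₂)

lemma hasDerivAt_Phi {β θ₁ θ₂ x : ℝ} (hβ : β ≠ 0)
    (hc1 : θ₁ * θ₂ ≠ 0) (hc2 : θ₁ * (1 - θ₂) ≠ 0) (hc3 : (1 - θ₁) * θ₂ ≠ 0)
    (hc4 : (1 - θ₁) * (1 - θ₂) ≠ 0)
    (hx : x ≠ 0) (ha : θ₁ - x ≠ 0) (hb : θ₂ - x ≠ 0) (hd : 1 - θ₁ - θ₂ + x ≠ 0) :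
    HasDerivAt (fun s => Phi β θ₁ θ₂ s) (Phi' β θ₁ θ₂ x) x := by
  rw [Phi_eq θ₁ θ₂ hβ]
  have hlin1 : HasDerivAt (fun s : ℝ => θ₁ - s) (-1) x := by
    simpa using (hasDerivAt_id x).const_sub θ₁
  have hlin2 : HasDerivAt (fun s : ℝ => θ₂ - s) (-1) x := by
    simpa using (hasDerivAt_id x).const_sub θ₂
  have hlin3 : HasDerivAt (fun s : ℝ => 1 - θ₁ - θ₂ + s) 1 x := by
    simpa using (hasDerivAt_id x).const_add (1 - θ₁ - θ₂)
  have d0 := hasDerivAt_xlog hc1 hx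
  have dA : HasDerivAt (fun s : ℝ => (θ₁ - s) * Real.log ((θ₁ - s) / (θ₁ * (1 - θ₂))))
      ((Real.log ((θ₁ - x) / (θ₁ * (1 - θ₂))) + 1) * (-1)) x :=
    (hasDerivAt_xlog hc2 ha).comp x hlin1
  have dB : HasDerivAt (fun s : ℝ => (θ₂ - s) * Real.log ((θ₂ - s) / ((1 - θ₁) * θ₂)))
      ((Real.log ((θ₂ - x) / ((1 - θ₁) * θ₂)) + 1) * (-1)) x :=
    (hasDerivAt_xlog hc3 hb).comp x hlin2
  have dC : HasDerivAt
      (fun s : ℝ => (1 - θ₁ - θ₂ + s) * Real.log ((1 - θ₁ - θ₂ + s) / ((1 - θ₁) * (1 - θ₂))))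
      ((Real.log ((1 - θ₁ - θ₂ + x) / ((1 - θ₁) * (1 - θ₂))) + 1) * 1) x :=
    (hasDerivAt_xlog hc4 hd).comp x hlin3
  have F0 := hasDerivAt_F hβ x
  have FA : HasDerivAt (fun s : ℝ => ∫ y in (0:ℝ)..(θ₁ - s), fI β y) (fI β (θ₁ - x) * (-1)) x :=
    (hasDerivAt_F hβ (θ₁ - x)).comp x hlin1
  have FB : HasDerivAt (fun s : ℝ => ∫ y in (0:ℝ)..(θ₂ - s), fI β y) (fI β (θ₂ - x) * (-1)) x :=
    (hasDerivAt_F hβ (θ₂ - x)).comp x hlin2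
  have FC : HasDerivAt (fun s : ℝ => ∫ y in (0:ℝ)..(1 - θ₁ - θ₂ + s), fI β y)
      (fI β (1 - θ₁ - θ₂ + x) * 1) x :=
    (hasDerivAt_F hβ (1 - θ₁ - θ₂ + x)).comp x hlin3
  have dq : HasDerivAt (fun s : ℝ => β * (θ₁ - s) * (θ₂ - s))
      ((β * (-1)) * (θ₂ - x) + (β * (θ₁ - x)) * (-1)) x :=
    (hlin1.const_mul β).mul hlin2
  have H := (((((((((hasDerivAt_const x
      (pP β - θ₁ * pP (β * θ₁) - θ₂ * pP (β * θ₂)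
        - (1 - θ₂) * pP (β * (1 - θ₂)) - (1 - θ₁) * pP (β * (1 - θ₁)))).add
      d0).add dA).add dB).add dC).add F0).add FA).add FB).add FC).add dq
  refine H.congr_deriv ?_
  simp only [Phi']
  ring

lemma termId {β u : ℝ} (hβ : β ≠ 0) (hu : u ≠ 0) :
    β * Real.exp (-β * u) / (1 - Real.exp (-β * u)) + β / 2
      = β / (2 * Real.tanh (β * u / 2)) := by
  have hx : β * u / 2 ≠ 0 := div_ne_zero (mul_ne_zero hβ hu) two_ne_zero
  have hexp : Real.exp (-β * u) = (Real.exp (β * u / 2))⁻¹ * (Real.exp (β * u / 2))⁻¹ := by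
    rw [← Real.exp_neg, ← Real.exp_add]
    congr 1
    ring
  have hpos : 0 < Real.exp (β * u / 2) := Real.exp_pos _
  have hne : Real.exp (β * u / 2) ≠ 0 := hpos.ne'
  have hone : Real.exp (β * u / 2) ≠ 1 := fun h => hx (by simpa using h)
  set a := Real.exp (β * u / 2) with ha
  have h2 : a * a ≠ 1 := by
    intro h
    rcases mul_self_eq_one_iff.mp h with h' | h'
    · exact hone h'
    · rw [h'] at hpos; linarith
  have h3 : (1 : ℝ) - a⁻¹ * a⁻¹ ≠ 0 := by
    rw [sub_ne_zero]
    intro h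
    apply h2
    field_simp at h
    linarith [h]
  have h4 : a - a⁻¹ ≠ 0 := by
    rw [sub_ne_zero]
    intro h
    apply h2
    have hh : a * a = a * a⁻¹ := by rw [← h]
    rw [hh, mul_inv_cancel₀ hne]
  have h5 : a + a⁻¹ ≠ 0 := (add_pos hpos (inv_pos.mpr hpos)).ne'
  have h6 : (-1:ℝ) + a ^ 2 ≠ 0 := by
    intro h; apply h2; rw [← sq]; linarith
  have h7 : (-2:ℝ) + a ^ 2 * 2 ≠ 0 := by
    intro h; apply h2; rw [← sq]; linarith
  rw [Real.tanh_eq_sinh_div_cosh, Real.sinh_eq, Real.cosh_eq, hexp, Real.exp_neg, ← ha]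
  field_simp
  have hden : a * a - 1 ≠ 0 := sub_ne_zero.mpr h2
  rw [div_add_one (by rw [sq]; exact hden)]
  ring

end S15aux

open S15aux


/-- The second derivative of `t ↦ Φ_β(θ₁,θ₂;t)` on the interior of `I_{θ₁,θ₂}` equals
`Σ_{i,j} β/(2 tanh(β t_{ij}/2))`. -/
theorem statement15 (β θ₁ θ₂ : ℝ) (hβ : β ≠ 0)
    (hθ₁ : θ₁ ∈ Set.Ioo (0:ℝ) 1) (hθ₂ : θ₂ ∈ Set.Ioo (0:ℝ) 1)
    (t : ℝ) (ht : t ∈ Set.Ioo (max 0 (θ₁ + θ₂ - 1)) (min θ₁ θ₂)) :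
    deriv (deriv (fun s => Phi β θ₁ θ₂ s)) t =
      β / (2 * Real.tanh (β * t / 2))
      + β / (2 * Real.tanh (β * (θ₁ - t) / 2))
      + β / (2 * Real.tanh (β * (θ₂ - t) / 2))
      + β / (2 * Real.tanh (β * (1 - θ₁ - θ₂ + t) / 2)) := by
  obtain ⟨h01, h11⟩ := hθ₁
  obtain ⟨h02, h12⟩ := hθ₂
  obtain ⟨hl, hr⟩ := ht
  rw [max_lt_iff] at hl
  rw [lt_min_iff] at hr
  have ht0 : (0:ℝ) < t := hl.1
  have hta : t < θ₁ := hr.1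
  have htb : t < θ₂ := hr.2
  have htd : (0:ℝ) < 1 - θ₁ - θ₂ + t := by linarith [hl.2]
  have hc1 : θ₁ * θ₂ ≠ 0 := by positivity
  have hc2 : θ₁ * (1 - θ₂) ≠ 0 := by
    have : (0:ℝ) < 1 - θ₂ := by linarith
    positivity
  have hc3 : (1 - θ₁) * θ₂ ≠ 0 := by
    have : (0:ℝ) < 1 - θ₁ := by linarith
    positivity
  have hc4 : (1 - θ₁) * (1 - θ₂) ≠ 0 := by
    have : (0:ℝ) < 1 - θ₁ := by linarith
    have : (0:ℝ) < 1 - θ₂ := by linarith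
    positivity
  -- the first derivative near t
  have hev : ∀ᶠ s in 𝓝 t, s ≠ 0 ∧ θ₁ - s ≠ 0 ∧ θ₂ - s ≠ 0 ∧ 1 - θ₁ - θ₂ + s ≠ 0 := by
    filter_upwards [eventually_gt_nhds ht0, eventually_lt_nhds hta, eventually_lt_nhds htb,
      eventually_gt_nhds (show θ₁ + θ₂ - 1 < t from hl.2)] with s a b c d
    refine ⟨a.ne', sub_ne_zero.mpr b.ne', sub_ne_zero.mpr c.ne', ?_⟩
    have : (0:ℝ) < 1 - θ₁ - θ₂ + s := by linarith
    exact this.ne'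
  have hderiv_ev : deriv (fun s => Phi β θ₁ θ₂ s) =ᶠ[𝓝 t] fun s => Phi' β θ₁ θ₂ s := by
    filter_upwards [hev] with s hs
    exact (hasDerivAt_Phi hβ hc1 hc2 hc3 hc4 hs.1 hs.2.1 hs.2.2.1 hs.2.2.2).deriv
  rw [Filter.EventuallyEq.deriv_eq hderiv_ev]
  -- now differentiate Phi' at t
  have hxt : t ≠ 0 := ht0.ne'
  have hxa : θ₁ - t ≠ 0 := sub_ne_zero.mpr hta.ne'
  have hxb : θ₂ - t ≠ 0 := sub_ne_zero.mpr htb.ne'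
  have hxd : 1 - θ₁ - θ₂ + t ≠ 0 := htd.ne'
  have hlin1 : HasDerivAt (fun s : ℝ => θ₁ - s) (-1) t := by
    simpa using (hasDerivAt_id t).const_sub θ₁
  have hlin2 : HasDerivAt (fun s : ℝ => θ₂ - s) (-1) t := by
    simpa using (hasDerivAt_id t).const_sub θ₂
  have hlin3 : HasDerivAt (fun s : ℝ => 1 - θ₁ - θ₂ + s) 1 t := by
    simpa using (hasDerivAt_id t).const_add (1 - θ₁ - θ₂)
  have L1 : HasDerivAt (fun s : ℝ => Real.log (s / (θ₁ * θ₂)))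
      ((1 / (θ₁ * θ₂)) / (t / (θ₁ * θ₂))) t := by
    have hd : HasDerivAt (fun s : ℝ => s / (θ₁ * θ₂)) (1 / (θ₁ * θ₂)) t := by
      simpa using (hasDerivAt_id t).div_const (θ₁ * θ₂)
    exact hd.log (div_ne_zero hxt hc1)
  have L2 : HasDerivAt (fun s : ℝ => Real.log ((θ₁ - s) / (θ₁ * (1 - θ₂))))
      (((1 / (θ₁ * (1 - θ₂))) / ((θ₁ - t) / (θ₁ * (1 - θ₂)))) * (-1)) t := by
    have hd : HasDerivAt (fun s : ℝ => s / (θ₁ * (1 - θ₂))) (1 / (θ₁ * (1 - θ₂))) (θ₁ - t) := by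
      simpa using (hasDerivAt_id (θ₁ - t)).div_const (θ₁ * (1 - θ₂))
    exact (hd.log (div_ne_zero hxa hc2)).comp t hlin1
  have L3 : HasDerivAt (fun s : ℝ => Real.log ((θ₂ - s) / ((1 - θ₁) * θ₂)))
      (((1 / ((1 - θ₁) * θ₂)) / ((θ₂ - t) / ((1 - θ₁) * θ₂))) * (-1)) t := by
    have hd : HasDerivAt (fun s : ℝ => s / ((1 - θ₁) * θ₂)) (1 / ((1 - θ₁) * θ₂)) (θ₂ - t) := by
      simpa using (hasDerivAt_id (θ₂ - t)).div_const ((1 - θ₁) * θ₂)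
    exact (hd.log (div_ne_zero hxb hc3)).comp t hlin2
  have L4 : HasDerivAt (fun s : ℝ => Real.log ((1 - θ₁ - θ₂ + s) / ((1 - θ₁) * (1 - θ₂))))
      (((1 / ((1 - θ₁) * (1 - θ₂))) / ((1 - θ₁ - θ₂ + t) / ((1 - θ₁) * (1 - θ₂)))) * 1) t := by
    have hd : HasDerivAt (fun s : ℝ => s / ((1 - θ₁) * (1 - θ₂))) (1 / ((1 - θ₁) * (1 - θ₂)))
        (1 - θ₁ - θ₂ + t) := by
      simpa using (hasDerivAt_id (1 - θ₁ - θ₂ + t)).div_const ((1 - θ₁) * (1 - θ₂))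
    exact (hd.log (div_ne_zero hxd hc4)).comp t hlin3
  have G1 := hasDerivAt_fI hβ hxt
  have G2 : HasDerivAt (fun s : ℝ => fI β (θ₁ - s))
      ((β * Real.exp (-β * (θ₁ - t)) / (1 - Real.exp (-β * (θ₁ - t))) - 1 / (θ₁ - t)) * (-1)) t :=
    (hasDerivAt_fI hβ hxa).comp t hlin1
  have G3 : HasDerivAt (fun s : ℝ => fI β (θ₂ - s))
      ((β * Real.exp (-β * (θ₂ - t)) / (1 - Real.exp (-β * (θ₂ - t))) - 1 / (θ₂ - t)) * (-1)) t :=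
    (hasDerivAt_fI hβ hxb).comp t hlin2
  have G4 : HasDerivAt (fun s : ℝ => fI β (1 - θ₁ - θ₂ + s))
      ((β * Real.exp (-β * (1 - θ₁ - θ₂ + t)) / (1 - Real.exp (-β * (1 - θ₁ - θ₂ + t)))
        - 1 / (1 - θ₁ - θ₂ + t)) * 1) t :=
    (hasDerivAt_fI hβ hxd).comp t hlin3
  have dlin : HasDerivAt (fun s : ℝ => β * (2 * s - θ₁ - θ₂)) (β * 2) t := by
    have h : HasDerivAt (fun s : ℝ => 2 * s - θ₁ - θ₂) 2 t := by
      simpa using (((hasDerivAt_id t).const_mul (2:ℝ)).sub_const θ₁).sub_const θ₂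
    simpa using h.const_mul β
  have HD := ((((((((L1.sub L2).sub L3).add L4).add G1).sub G2).sub G3).add G4).add dlin)
  have hPhi' : HasDerivAt (fun s => Phi' β θ₁ θ₂ s)
      (β / (2 * Real.tanh (β * t / 2))
      + β / (2 * Real.tanh (β * (θ₁ - t) / 2))
      + β / (2 * Real.tanh (β * (θ₂ - t) / 2))
      + β / (2 * Real.tanh (β * (1 - θ₁ - θ₂ + t) / 2))) t := by
    have heq : (fun s => Phi' β θ₁ θ₂ s) = fun s : ℝ =>
        Real.log (s / (θ₁ * θ₂)) - Real.log ((θ₁ - s) / (θ₁ * (1 - θ₂)))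
        - Real.log ((θ₂ - s) / ((1 - θ₁) * θ₂))
        + Real.log ((1 - θ₁ - θ₂ + s) / ((1 - θ₁) * (1 - θ₂)))
        + fI β s - fI β (θ₁ - s) - fI β (θ₂ - s) + fI β (1 - θ₁ - θ₂ + s)
        + β * (2 * s - θ₁ - θ₂) := by
      funext s; simp only [Phi']
    rw [heq]
    refine HD.congr_deriv ?_
    have r1 : (1 / (θ₁ * θ₂)) / (t / (θ₁ * θ₂)) = 1 / t := by
      field_simp
    have r2 : (1 / (θ₁ * (1 - θ₂))) / ((θ₁ - t) / (θ₁ * (1 - θ₂))) = 1 / (θ₁ - t) := by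
      field_simp
    have r3 : (1 / ((1 - θ₁) * θ₂)) / ((θ₂ - t) / ((1 - θ₁) * θ₂)) = 1 / (θ₂ - t) := by
      field_simp
    have r4 : (1 / ((1 - θ₁) * (1 - θ₂))) / ((1 - θ₁ - θ₂ + t) / ((1 - θ₁) * (1 - θ₂)))
        = 1 / (1 - θ₁ - θ₂ + t) := by
      field_simp
    rw [r1, r2, r3, r4, ← termId hβ hxt, ← termId hβ hxa, ← termId hβ hxb, ← termId hβ hxd]
    ring
  rw [hPhi'.deriv]


end
end

section
/- Let β ≠ 0 and (θ₁,θ₂) ∈ (0,1)². For every t in the open interval (max{0,θ₁+θ₂−1}, min{θ₁,θ₂}), the first derivative of t ↦ Φ_β(θ₁,θ₂;t) equals ln[(1−e^{−β t₁₁})(1−e^{−β t₂₂}) / ((e^{β t₁₂}−1)(e^{β t₂₁}−1))], where t₁₁ = t, t₁₂ = θ₁ − t, t₂₁ = θ₂ − t, t₂₂ = 1 − θ₁ − θ₂ + t; in particular, t is a critical point of Φ_β(θ₁,θ₂;·) if and only if (1−e^{−β t₁₁})(1−e^{−β t₂₂}) = (e^{β t₁₂}−1)(e^{β t₂₁}−1).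 -/
open MeasureTheory Real Set Filter ENNReal
open scoped Classical Topology

noncomputable section

lemma gcont (β : ℝ) (hβ : β ≠ 0) :
    Continuous (fun x : ℝ => Real.log ((1 - Real.exp (-β * x)) / (β * x))) := by
  rw [continuous_iff_continuousAt]
  intro x
  by_cases hx : x = 0
  · subst hx
    have h0 : Real.log ((1 - Real.exp (-β * 0)) / (β * 0)) = 0 := by simp
    have hd : HasDerivAt (fun y : ℝ => 1 - Real.exp (-β * y)) β 0 := by
      have h1 : HasDerivAt (fun y : ℝ => -β * y) (-β) 0 := by
        simpa using (hasDerivAt_id (0:ℝ)).const_mul (-β)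
      have h2 := (Real.hasDerivAt_exp (-β * 0)).comp 0 h1
      have h3 := h2.const_sub 1
      simpa using h3
    have hslope : Tendsto (slope (fun y : ℝ => 1 - Real.exp (-β * y)) 0) (𝓝[≠] 0) (𝓝 β) :=
      hasDerivAt_iff_tendsto_slope.1 hd
    have hratio : Tendsto (fun y : ℝ => (1 - Real.exp (-β * y)) / (β * y)) (𝓝[≠] 0) (𝓝 1) := by
      have h := hslope.div_const β
      rw [div_self hβ] at h
      refine h.congr' ?_
      filter_upwards [self_mem_nhdsWithin] with y hy
      have hy' : (y : ℝ) ≠ 0 := hy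
      have hs : slope (fun y : ℝ => 1 - Real.exp (-β * y)) 0 y
          = (1 - Real.exp (-β * y)) / y := by
        rw [slope_def_field]; norm_num
      rw [hs, div_div, mul_comm y β]
    have hlog : Tendsto (fun y : ℝ => Real.log ((1 - Real.exp (-β * y)) / (β * y))) (𝓝[≠] 0) (𝓝 0) := by
      have := (Real.continuousAt_log (by norm_num : (1:ℝ) ≠ 0)).tendsto.comp hratio
      simpa [Function.comp_def] using this
    rw [ContinuousAt, h0]
    have hsup : 𝓝 (0:ℝ) = 𝓝[≠] (0:ℝ) ⊔ pure 0 := (nhdsNE_sup_pure 0).symm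
    nth_rewrite 1 [hsup]
    rw [tendsto_sup]
    refine ⟨hlog, ?_⟩
    simpa only [h0] using tendsto_pure_nhds
      (fun y : ℝ => Real.log ((1 - Real.exp (-β * y)) / (β * y))) 0
  · have hnum : 1 - Real.exp (-β * x) ≠ 0 := by
      rw [sub_ne_zero]
      intro h
      exact mul_ne_zero (neg_ne_zero.2 hβ) hx ((Real.exp_eq_one_iff _).1 h.symm)
    have hden : β * x ≠ 0 := mul_ne_zero hβ hx
    have hval : (1 - Real.exp (-β * x)) / (β * x) ≠ 0 := div_ne_zero hnum hden
    have h1 : ContinuousAt (fun y : ℝ => (1 - Real.exp (-β * y)) / (β * y)) x := by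
      apply ContinuousAt.div
      · fun_prop
      · fun_prop
      · exact hden
    exact ContinuousAt.log h1 hval

lemma hasDerivG (β : ℝ) (hβ : β ≠ 0) (x : ℝ) (hx : x ≠ 0) :
    HasDerivAt (fun y : ℝ => y * pP (β * y))
      (Real.log ((1 - Real.exp (-β * x)) / (β * x))) x := by
  set g : ℝ → ℝ := fun v => Real.log ((1 - Real.exp (-β * v)) / (β * v)) with hg
  have hgc : Continuous g := gcont β hβ
  have hF : HasDerivAt (fun y : ℝ => ∫ v in (0:ℝ)..y, g v) (g x) x :=
    intervalIntegral.integral_hasDerivAt_right (hgc.intervalIntegrable 0 x)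
      hgc.stronglyMeasurable.stronglyMeasurableAtFilter hgc.continuousAt
  have heq : (fun y : ℝ => y * pP (β * y)) =ᶠ[𝓝 x] (fun y : ℝ => ∫ v in (0:ℝ)..y, g v) := by
    filter_upwards [eventually_ne_nhds hx] with y hy
    have hβy : β * y ≠ 0 := mul_ne_zero hβ hy
    have h1 : pP (β * y) = ∫ u in (0:ℝ)..1, g (u * y) := by
      rw [pP, if_neg hβy]
      apply intervalIntegral.integral_congr
      intro u _
      rw [hg]
      norm_num
      rw [show β * y * u = β * (u * y) by ring]
    have h2 : (∫ u in (0:ℝ)..1, g (u * y)) = y⁻¹ • ∫ v in (0:ℝ)..(1*y), g v := by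
      have := intervalIntegral.integral_comp_mul_right g hy (a := 0) (b := 1)
      simpa using this
    rw [h1, h2, one_mul, smul_eq_mul, ← mul_assoc, mul_inv_cancel₀ hy, one_mul]
  exact hF.congr_of_eventuallyEq heq

lemma hasDerivEnt (c x : ℝ) (hc : c ≠ 0) (hx : x ≠ 0) :
    HasDerivAt (fun y : ℝ => y * Real.log (y / c)) (Real.log (x / c) + 1) x := by
  have h1 : HasDerivAt (fun y : ℝ => y * Real.log y - Real.log c * y)
      (Real.log x + 1 - Real.log c) x :=
    (Real.hasDerivAt_mul_log hx).sub (by simpa using (hasDerivAt_id x).const_mul (Real.log c))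
  have heq : (fun y : ℝ => y * Real.log (y / c)) =ᶠ[𝓝 x]
      (fun y : ℝ => y * Real.log y - Real.log c * y) := by
    filter_upwards [eventually_ne_nhds hx] with y hy
    rw [Real.log_div hy hc]; ring
  have := h1.congr_of_eventuallyEq heq
  rw [Real.log_div hx hc]
  rwa [show Real.log x - Real.log c + 1 = Real.log x + 1 - Real.log c by ring]

lemma one_sub_exp_ne (z : ℝ) (hz : z ≠ 0) : 1 - Real.exp z ≠ 0 := by
  rw [sub_ne_zero]
  exact fun h => hz ((Real.exp_eq_one_iff _).1 h.symm)

lemma exp_sub_one_ne (z : ℝ) (hz : z ≠ 0) : Real.exp z - 1 ≠ 0 := by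
  rw [sub_ne_zero]
  exact fun h => hz ((Real.exp_eq_one_iff _).1 h)

/-- The first derivative of `t ↦ Φ_β(θ₁,θ₂;t)` on the interior of `I_{θ₁,θ₂}` equals
`ln[(1−e^{−βt₁₁})(1−e^{−βt₂₂})/((e^{βt₁₂}−1)(e^{βt₂₁}−1))]`; in particular `t` is a
critical point iff `(1−e^{−βt₁₁})(1−e^{−βt₂₂}) = (e^{βt₁₂}−1)(e^{βt₂₁}−1)`. -/
theorem statement16 (β θ₁ θ₂ : ℝ) (hβ : β ≠ 0)
    (hθ₁ : θ₁ ∈ Set.Ioo (0:ℝ) 1) (hθ₂ : θ₂ ∈ Set.Ioo (0:ℝ) 1)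
    (t : ℝ) (ht : t ∈ Set.Ioo (max 0 (θ₁ + θ₂ - 1)) (min θ₁ θ₂)) :
    deriv (fun s => Phi β θ₁ θ₂ s) t =
      Real.log ((1 - Real.exp (-β * t)) * (1 - Real.exp (-β * (1 - θ₁ - θ₂ + t))) /
        ((Real.exp (β * (θ₁ - t)) - 1) * (Real.exp (β * (θ₂ - t)) - 1))) ∧
    (deriv (fun s => Phi β θ₁ θ₂ s) t = 0 ↔
      (1 - Real.exp (-β * t)) * (1 - Real.exp (-β * (1 - θ₁ - θ₂ + t))) =
        (Real.exp (β * (θ₁ - t)) - 1) * (Real.exp (β * (θ₂ - t)) - 1)) := by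
  obtain ⟨htl, htr⟩ := ht
  have ht0 : 0 < t := lt_of_le_of_lt (le_max_left _ _) htl
  have ht1 : t < θ₁ := lt_of_lt_of_le htr (min_le_left _ _)
  have ht2 : t < θ₂ := lt_of_lt_of_le htr (min_le_right _ _)
  have ht4 : 0 < 1 - θ₁ - θ₂ + t := by
    have := lt_of_le_of_lt (le_max_right _ _) htl; linarith
  have hx1 : t ≠ 0 := ht0.ne'
  have hx2 : θ₁ - t ≠ 0 := (sub_pos.2 ht1).ne'
  have hx3 : θ₂ - t ≠ 0 := (sub_pos.2 ht2).ne'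
  have hx4 : 1 - θ₁ - θ₂ + t ≠ 0 := ht4.ne'
  have hθ1 : θ₁ ≠ 0 := hθ₁.1.ne'
  have hθ2 : θ₂ ≠ 0 := hθ₂.1.ne'
  have h1θ1 : (1:ℝ) - θ₁ ≠ 0 := (sub_pos.2 hθ₁.2).ne'
  have h1θ2 : (1:ℝ) - θ₂ ≠ 0 := (sub_pos.2 hθ₂.2).ne'
  have ha1 : 1 - Real.exp (-β * t) ≠ 0 :=
    one_sub_exp_ne _ (mul_ne_zero (neg_ne_zero.2 hβ) hx1)
  have ha2 : 1 - Real.exp (-β * (θ₁ - t)) ≠ 0 :=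
    one_sub_exp_ne _ (mul_ne_zero (neg_ne_zero.2 hβ) hx2)
  have ha3 : 1 - Real.exp (-β * (θ₂ - t)) ≠ 0 :=
    one_sub_exp_ne _ (mul_ne_zero (neg_ne_zero.2 hβ) hx3)
  have ha4 : 1 - Real.exp (-β * (1 - θ₁ - θ₂ + t)) ≠ 0 :=
    one_sub_exp_ne _ (mul_ne_zero (neg_ne_zero.2 hβ) hx4)
  have hE2 : Real.exp (β * (θ₁ - t)) - 1 ≠ 0 := exp_sub_one_ne _ (mul_ne_zero hβ hx2)
  have hE3 : Real.exp (β * (θ₂ - t)) - 1 ≠ 0 := exp_sub_one_ne _ (mul_ne_zero hβ hx3)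
  -- rewrite Phi
  have hPhi : (fun s => Phi β θ₁ θ₂ s) = fun s =>
      pP β + s * Real.log (s / (θ₁ * θ₂))
      + (θ₁ - s) * Real.log ((θ₁ - s) / (θ₁ * (1 - θ₂)))
      + (θ₂ - s) * Real.log ((θ₂ - s) / ((1 - θ₁) * θ₂))
      + (1 - θ₁ - θ₂ + s) * Real.log ((1 - θ₁ - θ₂ + s) / ((1 - θ₁) * (1 - θ₂)))
      + s * pP (β * s) + (θ₁ - s) * pP (β * (θ₁ - s)) + (θ₂ - s) * pP (β * (θ₂ - s))
      + (1 - θ₁ - θ₂ + s) * pP (β * (1 - θ₁ - θ₂ + s))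
      - θ₁ * pP (β * θ₁) - θ₂ * pP (β * θ₂)
      - (1 - θ₂) * pP (β * (1 - θ₂)) - (1 - θ₁) * pP (β * (1 - θ₁))
      + β * ((θ₁ - s) * (θ₂ - s)) := by
    funext s
    simp only [Phi, Phit]
    rw [show s + (θ₁ - s) = θ₁ by ring, show s + (θ₂ - s) = θ₂ by ring,
        show θ₁ - s + (1 - θ₁ - θ₂ + s) = 1 - θ₂ by ring,
        show θ₂ - s + (1 - θ₁ - θ₂ + s) = 1 - θ₁ by ring]
    ring
  -- inner derivatives
  have hi1 : HasDerivAt (fun s : ℝ => θ₁ - s) (-1) t := by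
    simpa using (hasDerivAt_id t).const_sub θ₁
  have hi2 : HasDerivAt (fun s : ℝ => θ₂ - s) (-1) t := by
    simpa using (hasDerivAt_id t).const_sub θ₂
  have hi3 : HasDerivAt (fun s : ℝ => 1 - θ₁ - θ₂ + s) 1 t := by
    simpa using (hasDerivAt_id t).const_add (1 - θ₁ - θ₂)
  have e1 := hasDerivEnt (θ₁ * θ₂) t (mul_ne_zero hθ1 hθ2) hx1
  have e2 := (hasDerivEnt (θ₁ * (1 - θ₂)) (θ₁ - t) (mul_ne_zero hθ1 h1θ2) hx2).comp t hi1
  have e3 := (hasDerivEnt ((1 - θ₁) * θ₂) (θ₂ - t) (mul_ne_zero h1θ1 hθ2) hx3).comp t hi2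
  have e4 := (hasDerivEnt ((1 - θ₁) * (1 - θ₂)) (1 - θ₁ - θ₂ + t)
      (mul_ne_zero h1θ1 h1θ2) hx4).comp t hi3
  have g1 := hasDerivG β hβ t hx1
  have g2 := (hasDerivG β hβ (θ₁ - t) hx2).comp t hi1
  have g3 := (hasDerivG β hβ (θ₂ - t) hx3).comp t hi2
  have g4 := (hasDerivG β hβ (1 - θ₁ - θ₂ + t) hx4).comp t hi3
  have q : HasDerivAt (fun s : ℝ => β * ((θ₁ - s) * (θ₂ - s)))
      (β * (-1 * (θ₂ - t) + (θ₁ - t) * -1)) t := (hi1.mul hi2).const_mul β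
  have H : HasDerivAt (fun s => Phi β θ₁ θ₂ s)
      (0 + (Real.log (t / (θ₁ * θ₂)) + 1)
        + (Real.log ((θ₁ - t) / (θ₁ * (1 - θ₂))) + 1) * (-1)
        + (Real.log ((θ₂ - t) / ((1 - θ₁) * θ₂)) + 1) * (-1)
        + (Real.log ((1 - θ₁ - θ₂ + t) / ((1 - θ₁) * (1 - θ₂))) + 1) * 1
        + Real.log ((1 - Real.exp (-β * t)) / (β * t))
        + Real.log ((1 - Real.exp (-β * (θ₁ - t))) / (β * (θ₁ - t))) * (-1)
        + Real.log ((1 - Real.exp (-β * (θ₂ - t))) / (β * (θ₂ - t))) * (-1)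
        + Real.log ((1 - Real.exp (-β * (1 - θ₁ - θ₂ + t))) / (β * (1 - θ₁ - θ₂ + t))) * 1
        + β * (-1 * (θ₂ - t) + (θ₁ - t) * -1)) t := by
    rw [hPhi]
    exact ((((((((((((((hasDerivAt_const t (pP β)).add e1).add e2).add e3).add e4).add
      g1).add g2).add g3).add g4).sub_const (θ₁ * pP (β * θ₁))).sub_const
      (θ₂ * pP (β * θ₂))).sub_const ((1 - θ₂) * pP (β * (1 - θ₂)))).sub_const
      ((1 - θ₁) * pP (β * (1 - θ₁)))).add q)
  have hE2eq : Real.exp (β * (θ₁ - t)) - 1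
      = Real.exp (β * (θ₁ - t)) * (1 - Real.exp (-β * (θ₁ - t))) := by
    have h : Real.exp (β * (θ₁ - t)) * Real.exp (-β * (θ₁ - t)) = 1 := by
      rw [← Real.exp_add, show β * (θ₁ - t) + -β * (θ₁ - t) = 0 by ring, Real.exp_zero]
    linear_combination h
  have hE3eq : Real.exp (β * (θ₂ - t)) - 1
      = Real.exp (β * (θ₂ - t)) * (1 - Real.exp (-β * (θ₂ - t))) := by
    have h : Real.exp (β * (θ₂ - t)) * Real.exp (-β * (θ₂ - t)) = 1 := by
      rw [← Real.exp_add, show β * (θ₂ - t) + -β * (θ₂ - t) = 0 by ring, Real.exp_zero]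
    linear_combination h
  have hmain : deriv (fun s => Phi β θ₁ θ₂ s) t =
      Real.log ((1 - Real.exp (-β * t)) * (1 - Real.exp (-β * (1 - θ₁ - θ₂ + t))) /
        ((Real.exp (β * (θ₁ - t)) - 1) * (Real.exp (β * (θ₂ - t)) - 1))) := by
    rw [H.deriv]
    rw [Real.log_div (mul_ne_zero ha1 ha4) (mul_ne_zero hE2 hE3),
        Real.log_mul ha1 ha4, Real.log_mul hE2 hE3, hE2eq, hE3eq,
        Real.log_mul (Real.exp_ne_zero _) ha2, Real.log_mul (Real.exp_ne_zero _) ha3,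
        Real.log_exp, Real.log_exp,
        Real.log_div hx1 (mul_ne_zero hθ1 hθ2),
        Real.log_div hx2 (mul_ne_zero hθ1 h1θ2),
        Real.log_div hx3 (mul_ne_zero h1θ1 hθ2),
        Real.log_div hx4 (mul_ne_zero h1θ1 h1θ2),
        Real.log_div ha1 (mul_ne_zero hβ hx1),
        Real.log_div ha2 (mul_ne_zero hβ hx2),
        Real.log_div ha3 (mul_ne_zero hβ hx3),
        Real.log_div ha4 (mul_ne_zero hβ hx4),
        Real.log_mul hθ1 hθ2, Real.log_mul hθ1 h1θ2, Real.log_mul h1θ1 hθ2,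
        Real.log_mul h1θ1 h1θ2,
        Real.log_mul hβ hx1, Real.log_mul hβ hx2, Real.log_mul hβ hx3, Real.log_mul hβ hx4]
    ring
  refine ⟨hmain, ?_⟩
  -- positivity of A and B
  have hApos : 0 < (1 - Real.exp (-β * t)) * (1 - Real.exp (-β * (1 - θ₁ - θ₂ + t))) := by
    rcases lt_or_gt_of_ne hβ with hb | hb
    · have h1 : Real.exp (-β * t) > 1 := Real.one_lt_exp_iff.2 (by nlinarith)
      have h2 : Real.exp (-β * (1 - θ₁ - θ₂ + t)) > 1 := Real.one_lt_exp_iff.2 (by nlinarith)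
      nlinarith
    · have h1 : Real.exp (-β * t) < 1 := Real.exp_lt_one_iff.2 (by nlinarith)
      have h2 : Real.exp (-β * (1 - θ₁ - θ₂ + t)) < 1 := Real.exp_lt_one_iff.2 (by nlinarith)
      nlinarith
  have hBpos : 0 < (Real.exp (β * (θ₁ - t)) - 1) * (Real.exp (β * (θ₂ - t)) - 1) := by
    rcases lt_or_gt_of_ne hβ with hb | hb
    · have h1 : Real.exp (β * (θ₁ - t)) < 1 := Real.exp_lt_one_iff.2 (by nlinarith)
      have h2 : Real.exp (β * (θ₂ - t)) < 1 := Real.exp_lt_one_iff.2 (by nlinarith)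
      nlinarith
    · have h1 : Real.exp (β * (θ₁ - t)) > 1 := Real.one_lt_exp_iff.2 (by nlinarith)
      have h2 : Real.exp (β * (θ₂ - t)) > 1 := Real.one_lt_exp_iff.2 (by nlinarith)
      nlinarith
  rw [hmain]
  constructor
  · intro h
    rcases Real.log_eq_zero.1 h with h0 | h0 | h0
    · exact absurd h0 (div_ne_zero hApos.ne' hBpos.ne')
    · exact (div_eq_one_iff_eq hBpos.ne').1 h0
    · have hp := div_pos hApos hBpos
      rw [h0] at hp
      linarith
  · intro h
    rw [h, div_self hBpos.ne', Real.log_one]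


end
end

section
/- Let β ≠ 0 and define R_β(θ₁,θ₂) = −(1/β) ln(1 − (1−e^{−βθ₁})(1−e^{−βθ₂})/(1−e^{−β})) and ρ_β(x,y) = β(1−e^{−β}) e^{−βx} e^{−βy} / [(1−e^{−β}) − (1−e^{−βx})(1−e^{−βy})]². Then ρ_β(x,y) > 0 for all (x,y) ∈ [0,1]², R_β(θ₁,θ₂) = ∫_{[0,θ₁]×[0,θ₂]} ρ_β(x,y) dx dy for all (θ₁,θ₂) ∈ [0,1]², and R_β(θ,1) = R_β(1,θ) = θ for all θ ∈ [0,1]; consequently ρ_β is the density of a Borel probability measure on [0,1]² with both marginals equal to Lebesgue measure. -/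
open MeasureTheory Real Set

noncomputable section

/-- The limiting joint distribution function `R_β(θ₁,θ₂)`. -/
def Rfun (β θ₁ θ₂ : ℝ) : ℝ :=
  -(1 / β) * Real.log (1 - (1 - Real.exp (-β * θ₁)) * (1 - Real.exp (-β * θ₂)) /
    (1 - Real.exp (-β)))

/-- The limiting density `ρ_β(x,y)`. -/
def rho (β x y : ℝ) : ℝ :=
  β * (1 - Real.exp (-β)) * Real.exp (-β * x) * Real.exp (-β * y) /
    ((1 - Real.exp (-β)) - (1 - Real.exp (-β * x)) * (1 - Real.exp (-β * y))) ^ 2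

/-- Key sign fact: `(c - g x * g y) * c > 0` on the unit square. -/
lemma Dc_pos (β : ℝ) (hβ : β ≠ 0) {x y : ℝ} (hx : x ∈ Set.Icc (0:ℝ) 1)
    (hy : y ∈ Set.Icc (0:ℝ) 1) :
    0 < ((1 - Real.exp (-β)) - (1 - Real.exp (-β*x)) * (1 - Real.exp (-β*y)))
      * (1 - Real.exp (-β)) := by
  obtain ⟨hx0, hx1⟩ := hx
  obtain ⟨hy0, hy1⟩ := hy
  rcases hβ.lt_or_gt with hneg | hpos
  · -- β < 0 : exp(-β) > 1, exp(-β*x) ∈ [1, exp(-β)]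
    have he : 1 < Real.exp (-β) := by
      rw [← Real.exp_zero]; exact Real.exp_lt_exp.mpr (by linarith)
    have hax1 : 1 ≤ Real.exp (-β*x) := by
      rw [← Real.exp_zero]; exact Real.exp_le_exp.mpr (by nlinarith)
    have hax2 : Real.exp (-β*x) ≤ Real.exp (-β) := by
      exact Real.exp_le_exp.mpr (by nlinarith)
    have hay1 : 1 ≤ Real.exp (-β*y) := by
      rw [← Real.exp_zero]; exact Real.exp_le_exp.mpr (by nlinarith)
    nlinarith [mul_nonneg (sub_nonneg.mpr hax1) (sub_nonneg.mpr hay1)]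
  · -- β > 0 : exp(-β) < 1, exp(-β*x) ∈ [exp(-β), 1]
    have he0 : 0 < Real.exp (-β) := Real.exp_pos _
    have he : Real.exp (-β) < 1 := by
      rw [← Real.exp_zero]; exact Real.exp_lt_exp.mpr (by linarith)
    have hax1 : Real.exp (-β*x) ≤ 1 := by
      rw [← Real.exp_zero]; exact Real.exp_le_exp.mpr (by nlinarith)
    have hax2 : Real.exp (-β) ≤ Real.exp (-β*x) := by
      exact Real.exp_le_exp.mpr (by nlinarith)
    have hay1 : Real.exp (-β*y) ≤ 1 := by
      rw [← Real.exp_zero]; exact Real.exp_le_exp.mpr (by nlinarith)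
    have hay2 : Real.exp (-β) ≤ Real.exp (-β*y) := by
      exact Real.exp_le_exp.mpr (by nlinarith)
    have key : (1 - Real.exp (-β*x)) * (1 - Real.exp (-β*y))
        ≤ (1 - Real.exp (-β)) * (1 - Real.exp (-β)) :=
      mul_le_mul (by linarith) (by linarith) (by linarith) (by linarith)
    nlinarith [mul_pos he0 (sub_pos.mpr he)]

def Pfun (β x y : ℝ) : ℝ :=
  Real.exp (-β*x) * (1 - Real.exp (-β*y)) /
    ((1 - Real.exp (-β)) - (1 - Real.exp (-β*x)) * (1 - Real.exp (-β*y)))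

lemma c_ne (β : ℝ) (hβ : β ≠ 0) : (1 - Real.exp (-β)) ≠ 0 := by
  intro h
  have : Real.exp (-β) = 1 := by linarith
  exact hβ (by simpa [neg_eq_zero] using (Real.exp_eq_one_iff _).mp this)

lemma D_ne (β : ℝ) (hβ : β ≠ 0) {x y : ℝ} (hx : x ∈ Set.Icc (0:ℝ) 1)
    (hy : y ∈ Set.Icc (0:ℝ) 1) :
    ((1 - Real.exp (-β)) - (1 - Real.exp (-β*x)) * (1 - Real.exp (-β*y))) ≠ 0 := by
  intro h
  have := Dc_pos β hβ hx hy
  rw [h] at this; simp at this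

/-- the argument of the log is positive -/
lemma arg_pos (β : ℝ) (hβ : β ≠ 0) {x y : ℝ} (hx : x ∈ Set.Icc (0:ℝ) 1)
    (hy : y ∈ Set.Icc (0:ℝ) 1) :
    0 < 1 - (1 - Real.exp (-β*x)) * (1 - Real.exp (-β*y)) / (1 - Real.exp (-β)) := by
  have hc := c_ne β hβ
  have h := Dc_pos β hβ hx hy
  have : 1 - (1 - Real.exp (-β*x)) * (1 - Real.exp (-β*y)) / (1 - Real.exp (-β))
      = ((1 - Real.exp (-β)) - (1 - Real.exp (-β*x)) * (1 - Real.exp (-β*y)))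
        * (1 - Real.exp (-β)) / (1 - Real.exp (-β))^2 := by
    field_simp
  rw [this]
  positivity

lemma rho_pos (β : ℝ) (hβ : β ≠ 0) {x y : ℝ} (hx : x ∈ Set.Icc (0:ℝ) 1)
    (hy : y ∈ Set.Icc (0:ℝ) 1) : 0 < rho β x y := by
  have hD := D_ne β hβ hx hy
  have hbc : 0 < β * (1 - Real.exp (-β)) := by
    rcases hβ.lt_or_gt with h | h
    · have : Real.exp (-β) > 1 := by
        rw [← Real.exp_zero]; exact Real.exp_lt_exp.mpr (by linarith)
      nlinarith
    · have : Real.exp (-β) < 1 := by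
        rw [← Real.exp_zero]; exact Real.exp_lt_exp.mpr (by linarith)
      nlinarith
  unfold rho
  have h1 : (0:ℝ) < Real.exp (-β*x) := Real.exp_pos _
  have h2 : (0:ℝ) < Real.exp (-β*y) := Real.exp_pos _
  have h3 : (0:ℝ) < ((1 - Real.exp (-β)) - (1 - Real.exp (-β*x)) * (1 - Real.exp (-β*y)))^2 :=
    pow_two_pos_of_ne_zero hD
  exact div_pos (mul_pos (mul_pos hbc h1) h2) h3

lemma hasDeriv_g (β t : ℝ) :
    HasDerivAt (fun s => 1 - Real.exp (-β*s)) (β * Real.exp (-β*t)) t := by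
  have h0 : HasDerivAt (fun s : ℝ => -β*s) (-β) t := by
    simpa using (hasDerivAt_id t).const_mul (-β)
  have h := h0.exp
  have := h.const_sub 1
  refine this.congr_deriv ?_
  ring

lemma hasDeriv_y (β : ℝ) (hβ : β ≠ 0) {x y : ℝ} (hx : x ∈ Set.Icc (0:ℝ) 1)
    (hy : y ∈ Set.Icc (0:ℝ) 1) :
    HasDerivAt (fun t => Pfun β x t) (rho β x y) y := by
  have hD := D_ne β hβ hx hy
  have hN : HasDerivAt (fun t => Real.exp (-β*x) * (1 - Real.exp (-β*t)))
      (Real.exp (-β*x) * (β * Real.exp (-β*y))) y := (hasDeriv_g β y).const_mul _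
  have hDn : HasDerivAt (fun t => (1 - Real.exp (-β)) - (1 - Real.exp (-β*x)) * (1 - Real.exp (-β*t)))
      (-((1 - Real.exp (-β*x)) * (β * Real.exp (-β*y)))) y := by
    have := ((hasDeriv_g β y).const_mul (1 - Real.exp (-β*x))).const_sub (1 - Real.exp (-β))
    convert this using 1
  have := hN.div hDn hD
  refine this.congr_deriv ?_
  unfold rho
  field_simp
  ring

lemma hasDeriv_x (β : ℝ) (hβ : β ≠ 0) {x θ₂ : ℝ} (hx : x ∈ Set.Icc (0:ℝ) 1)
    (hy : θ₂ ∈ Set.Icc (0:ℝ) 1) :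
    HasDerivAt (fun t => Rfun β t θ₂) (Pfun β x θ₂) x := by
  have hc := c_ne β hβ
  have hD := D_ne β hβ hx hy
  have harg := arg_pos β hβ hx hy
  have hu : HasDerivAt (fun t => 1 - (1 - Real.exp (-β*t)) * (1 - Real.exp (-β*θ₂)) / (1 - Real.exp (-β)))
      (-(β * Real.exp (-β*x) * (1 - Real.exp (-β*θ₂)) / (1 - Real.exp (-β)))) x := by
    exact (((hasDeriv_g β x).mul_const (1 - Real.exp (-β*θ₂))).div_const (1 - Real.exp (-β))).const_sub 1
  have hlog := hu.log (ne_of_gt harg)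
  have := hlog.const_mul (-(1/β))
  refine this.congr_deriv ?_
  unfold Pfun
  have hArg : 1 - (1 - Real.exp (-β*x)) * (1 - Real.exp (-β*θ₂)) / (1 - Real.exp (-β))
      = ((1 - Real.exp (-β)) - (1 - Real.exp (-β*x)) * (1 - Real.exp (-β*θ₂))) / (1 - Real.exp (-β)) := by
    field_simp
  rw [hArg, show -(β * Real.exp (-β*x) * (1 - Real.exp (-β*θ₂)) / (1 - Real.exp (-β)))
      = (-(β * Real.exp (-β*x) * (1 - Real.exp (-β*θ₂)))) / (1 - Real.exp (-β)) from (neg_div _ _).symm,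
    div_div_div_cancel_right₀ hc, ← mul_div_assoc]
  congr 1
  field_simp

lemma rho_contOn (β : ℝ) (hβ : β ≠ 0) :
    ContinuousOn (fun p : ℝ×ℝ => rho β p.1 p.2) (Set.Icc 0 1 ×ˢ Set.Icc 0 1) := by
  unfold rho
  apply ContinuousOn.div
  · fun_prop
  · fun_prop
  · rintro ⟨x,y⟩ ⟨hx,hy⟩
    exact pow_ne_zero 2 (D_ne β hβ hx hy)

lemma rho_contOn_y (β : ℝ) (hβ : β ≠ 0) {x : ℝ} (hx : x ∈ Set.Icc (0:ℝ) 1) :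
    ContinuousOn (fun y => rho β x y) (Set.Icc 0 1) := by
  have := (rho_contOn β hβ).comp (f := fun y : ℝ => ((x, y) : ℝ × ℝ))
    (by fun_prop) (fun y hy => Set.mk_mem_prod hx hy)
  exact this

lemma Pfun_contOn (β : ℝ) (hβ : β ≠ 0) {θ₂ : ℝ} (hθ : θ₂ ∈ Set.Icc (0:ℝ) 1) :
    ContinuousOn (fun x => Pfun β x θ₂) (Set.Icc 0 1) := by
  unfold Pfun
  apply ContinuousOn.div
  · fun_prop
  · fun_prop
  · intro x hx
    exact D_ne β hβ hx hθ

lemma integral_rho_y (β : ℝ) (hβ : β ≠ 0) {x θ₂ : ℝ} (hx : x ∈ Set.Icc (0:ℝ) 1)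
    (hθ : θ₂ ∈ Set.Icc (0:ℝ) 1) :
    ∫ y in Set.Icc (0:ℝ) θ₂, rho β x y = Pfun β x θ₂ := by
  have hsub : Set.Icc (0:ℝ) θ₂ ⊆ Set.Icc 0 1 := Set.Icc_subset_Icc le_rfl hθ.2
  rw [MeasureTheory.integral_Icc_eq_integral_Ioc, ← intervalIntegral.integral_of_le hθ.1]
  have huIcc : Set.uIcc (0:ℝ) θ₂ = Set.Icc 0 θ₂ := Set.uIcc_of_le hθ.1
  have := intervalIntegral.integral_eq_sub_of_hasDerivAt
    (f := fun t => Pfun β x t) (f' := fun y => rho β x y)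
    (fun y hy => hasDeriv_y β hβ hx (hsub (huIcc ▸ hy)))
    (((rho_contOn_y β hβ hx).mono (huIcc ▸ hsub)).intervalIntegrable)
  rw [this]
  simp [Pfun]

lemma integral_P_x (β : ℝ) (hβ : β ≠ 0) {θ₁ θ₂ : ℝ} (hθ₁ : θ₁ ∈ Set.Icc (0:ℝ) 1)
    (hθ₂ : θ₂ ∈ Set.Icc (0:ℝ) 1) :
    ∫ x in Set.Icc (0:ℝ) θ₁, Pfun β x θ₂ = Rfun β θ₁ θ₂ := by
  have hsub : Set.Icc (0:ℝ) θ₁ ⊆ Set.Icc 0 1 := Set.Icc_subset_Icc le_rfl hθ₁.2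
  rw [MeasureTheory.integral_Icc_eq_integral_Ioc, ← intervalIntegral.integral_of_le hθ₁.1]
  have huIcc : Set.uIcc (0:ℝ) θ₁ = Set.Icc 0 θ₁ := Set.uIcc_of_le hθ₁.1
  have := intervalIntegral.integral_eq_sub_of_hasDerivAt
    (f := fun t => Rfun β t θ₂) (f' := fun x => Pfun β x θ₂)
    (fun x hxx => hasDeriv_x β hβ (hsub (huIcc ▸ hxx)) hθ₂)
    (((Pfun_contOn β hβ hθ₂).mono (huIcc ▸ hsub)).intervalIntegrable)
  rw [this]
  simp [Rfun]

lemma cdf_eq (β : ℝ) (hβ : β ≠ 0) {θ₁ θ₂ : ℝ} (hθ₁ : θ₁ ∈ Set.Icc (0:ℝ) 1)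
    (hθ₂ : θ₂ ∈ Set.Icc (0:ℝ) 1) :
    Rfun β θ₁ θ₂ = ∫ p in Set.Icc (0:ℝ) θ₁ ×ˢ Set.Icc (0:ℝ) θ₂, rho β p.1 p.2 := by
  have hsub : Set.Icc (0:ℝ) θ₁ ×ˢ Set.Icc (0:ℝ) θ₂ ⊆ Set.Icc 0 1 ×ˢ Set.Icc 0 1 :=
    Set.prod_mono (Set.Icc_subset_Icc le_rfl hθ₁.2) (Set.Icc_subset_Icc le_rfl hθ₂.2)
  have hint : IntegrableOn (fun p : ℝ×ℝ => rho β p.1 p.2)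
      (Set.Icc (0:ℝ) θ₁ ×ˢ Set.Icc (0:ℝ) θ₂) (volume.prod volume) :=
    ((rho_contOn β hβ).mono hsub).integrableOn_compact (isCompact_Icc.prod isCompact_Icc)
  rw [show (volume : Measure (ℝ×ℝ)) = volume.prod volume from rfl,
    MeasureTheory.setIntegral_prod _ hint]
  rw [MeasureTheory.setIntegral_congr_fun measurableSet_Icc
    (fun x hx => integral_rho_y β hβ (Set.Icc_subset_Icc le_rfl hθ₁.2 hx) hθ₂)]
  exact (integral_P_x β hβ hθ₁ hθ₂).symm

lemma Pfun_one (β : ℝ) (hβ : β ≠ 0) (x : ℝ) : Pfun β x 1 = 1 := by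
  have hc := c_ne β hβ
  have hex : Real.exp (-β*x) ≠ 0 := Real.exp_ne_zero _
  unfold Pfun
  rw [mul_one]
  have hd : (1 - Real.exp (-β)) - (1 - Real.exp (-β*x)) * (1 - Real.exp (-β))
      = Real.exp (-β*x) * (1 - Real.exp (-β)) := by ring
  rw [hd]
  exact div_self (mul_ne_zero hex hc)

lemma Rfun_one_right (β : ℝ) (hβ : β ≠ 0) (θ : ℝ) : Rfun β θ 1 = θ := by
  have hc := c_ne β hβ
  unfold Rfun
  rw [mul_one, mul_div_assoc, div_self hc, mul_one, sub_sub_cancel, Real.log_exp]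
  field_simp

lemma Rfun_one_left (β : ℝ) (hβ : β ≠ 0) (θ : ℝ) : Rfun β 1 θ = θ := by
  have hc := c_ne β hβ
  unfold Rfun
  rw [mul_one, mul_comm (1 - Real.exp (-β)), mul_div_assoc, div_self hc, mul_one,
    sub_sub_cancel, Real.log_exp]
  field_simp

instance : IsFiniteMeasure lamI := by
  unfold lamI; infer_instance

instance inst_s19 : SFinite lamI := by
  unfold lamI; infer_instance

lemma rho_symm (β x y : ℝ) : rho β x y = rho β y x := by
  unfold rho; ring_nf

lemma f_meas (β : ℝ) : Measurable (fun p : ℝ×ℝ => ENNReal.ofReal (rho β p.1 p.2)) := by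
  have h1 : Measurable fun p : ℝ×ℝ =>
      β * (1 - Real.exp (-β)) * Real.exp (-β * p.1) * Real.exp (-β * p.2) := by fun_prop
  have h2 : Measurable fun p : ℝ×ℝ =>
      ((1 - Real.exp (-β)) - (1 - Real.exp (-β * p.1)) * (1 - Real.exp (-β * p.2))) ^ 2 := by
    fun_prop
  exact (h1.div h2).ennreal_ofReal

lemma inner_one (β : ℝ) (hβ : β ≠ 0) {x : ℝ} (hx : x ∈ Set.Icc (0:ℝ) 1) :
    ∫⁻ y, ENNReal.ofReal (rho β x y) ∂lamI = 1 := by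
  unfold lamI
  have hint : IntegrableOn (fun y => rho β x y) (Set.Icc 0 1) volume :=
    (rho_contOn_y β hβ hx).integrableOn_compact isCompact_Icc
  have hnn : 0 ≤ᶠ[ae (volume.restrict (Set.Icc (0:ℝ) 1))] fun y => rho β x y :=
    (ae_restrict_iff' measurableSet_Icc).mpr
      (Filter.Eventually.of_forall fun y hy => (rho_pos β hβ hx hy).le)
  rw [← MeasureTheory.ofReal_integral_eq_lintegral_ofReal hint hnn]
  rw [show ∫ y in Set.Icc (0:ℝ) 1, rho β x y = Pfun β x 1 from
    integral_rho_y β hβ hx (Set.mem_Icc.mpr ⟨zero_le_one, le_rfl⟩)]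
  rw [Pfun_one β hβ]
  exact ENNReal.ofReal_one

lemma inner_one' (β : ℝ) (hβ : β ≠ 0) {y : ℝ} (hy : y ∈ Set.Icc (0:ℝ) 1) :
    ∫⁻ x, ENNReal.ofReal (rho β x y) ∂lamI = 1 := by
  have : ∀ x, rho β x y = rho β y x := fun x => rho_symm β x y
  simp_rw [this]
  exact inner_one β hβ hy

lemma map_fst_eq (β : ℝ) (hβ : β ≠ 0) :
    (lam2.withDensity (fun p => ENNReal.ofReal (rho β p.1 p.2))).map Prod.fst = lamI := by
  ext A hA
  rw [Measure.map_apply measurable_fst hA,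
    withDensity_apply _ (measurable_fst hA)]
  have hpre : Prod.fst ⁻¹' A = A ×ˢ (Set.univ : Set ℝ) := by ext p; simp
  rw [hpre]
  unfold lam2
  rw [← Measure.prod_restrict, Measure.restrict_univ,
    MeasureTheory.lintegral_prod _ (f_meas β).aemeasurable]
  have : ∫⁻ x, (∫⁻ y, ENNReal.ofReal (rho β x y) ∂lamI) ∂(lamI.restrict A)
      = ∫⁻ x, 1 ∂(lamI.restrict A) := by
    unfold lamI
    rw [Measure.restrict_restrict hA]
    exact setLIntegral_congr_fun (hA.inter measurableSet_Icc)
      (fun x hx => inner_one β hβ hx.2)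
  rw [this, lintegral_one]
  unfold lamI
  rw [Measure.restrict_restrict hA, Measure.restrict_apply hA]
  simp [Set.inter_comm]

lemma map_snd_eq (β : ℝ) (hβ : β ≠ 0) :
    (lam2.withDensity (fun p => ENNReal.ofReal (rho β p.1 p.2))).map Prod.snd = lamI := by
  ext B hB
  rw [Measure.map_apply measurable_snd hB,
    withDensity_apply _ (measurable_snd hB)]
  have hpre : Prod.snd ⁻¹' B = (Set.univ : Set ℝ) ×ˢ B := by ext p; simp
  rw [hpre]
  unfold lam2
  rw [← Measure.prod_restrict, Measure.restrict_univ,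
    MeasureTheory.lintegral_prod_symm _ (f_meas β).aemeasurable]
  have : ∫⁻ y, (∫⁻ x, ENNReal.ofReal (rho β x y) ∂lamI) ∂(lamI.restrict B)
      = ∫⁻ y, 1 ∂(lamI.restrict B) := by
    unfold lamI
    rw [Measure.restrict_restrict hB]
    exact setLIntegral_congr_fun (hB.inter measurableSet_Icc)
      (fun y hy => inner_one' β hβ hy.2)
  rw [this, lintegral_one]
  unfold lamI
  rw [Measure.restrict_restrict hB, Measure.restrict_apply hB]
  simp [Set.inter_comm]

/-- For `β ≠ 0`: `ρ_β > 0` on `[0,1]²`, `R_β` is the joint cumulative distribution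
function of the measure with density `ρ_β`, `R_β(θ,1) = R_β(1,θ) = θ`, and consequently
`ρ_β` is the density of a Borel probability measure on `[0,1]²` with both marginals
equal to Lebesgue measure. -/
theorem statement19 (β : ℝ) (hβ : β ≠ 0) :
    (∀ x ∈ Set.Icc (0:ℝ) 1, ∀ y ∈ Set.Icc (0:ℝ) 1, 0 < rho β x y) ∧
    (∀ θ₁ ∈ Set.Icc (0:ℝ) 1, ∀ θ₂ ∈ Set.Icc (0:ℝ) 1,
      Rfun β θ₁ θ₂ = ∫ p in Set.Icc (0:ℝ) θ₁ ×ˢ Set.Icc (0:ℝ) θ₂, rho β p.1 p.2) ∧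
    (∀ θ ∈ Set.Icc (0:ℝ) 1, Rfun β θ 1 = θ ∧ Rfun β 1 θ = θ) ∧
    IsProbabilityMeasure (lam2.withDensity (fun p => ENNReal.ofReal (rho β p.1 p.2))) ∧
    (lam2.withDensity (fun p => ENNReal.ofReal (rho β p.1 p.2))).map Prod.fst = lamI ∧
    (lam2.withDensity (fun p => ENNReal.ofReal (rho β p.1 p.2))).map Prod.snd = lamI := by
  refine ⟨fun x hx y hy => rho_pos β hβ hx hy,
    fun θ₁ h1 θ₂ h2 => cdf_eq β hβ h1 h2,
    fun θ hθ => ⟨Rfun_one_right β hβ θ, Rfun_one_left β hβ θ⟩, ?_,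
    map_fst_eq β hβ, map_snd_eq β hβ⟩
  constructor
  have h : ((lam2.withDensity (fun p => ENNReal.ofReal (rho β p.1 p.2))).map Prod.fst)
      Set.univ = lamI Set.univ := by rw [map_fst_eq β hβ]
  rw [Measure.map_apply measurable_fst MeasurableSet.univ, Set.preimage_univ] at h
  rw [h]
  simp [lamI, Real.volume_Icc]

end
end
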